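/- arXiv:2004.08983 — 5 statements merged into one kernel-verified Lean document; each statement's English description precedes it below -/
import Mathlib

section
/- Let 0 ≤ h < H, let Ω ⊂ ℝⁿ be a bounded domain, and let M satisfy h|Ω| ≤ M ≤ H|Ω| and M > 0. Suppose ρ : Ω → [h,H] is measurable with ∫_Ω ρ = M, and u ∈ H^s_0(Ω) satisfies ∫_Ω ρ u² > 0 and E_s(u) = Θ(h,H,M) · ∫_Ω ρ u², where Θ(h,H,M) is the double infimum of E_s(w)/∫_Ω ρ' w² over all admissible densities ρ' : Ω → [h,H] with ∫_Ω ρ' = M and all w ∈ H^s_0(Ω) with ∫_Ω ρ' w² > 0. Then u does not change sign: either u ≥ 0 almost everywhere in ℝⁿ or u ≤ 0 almost everywhere in ℝⁿ. -/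
open MeasureTheory
open scoped ENNReal

noncomputable section

/-- The Gagliardo double integral `∫∫ (u x − u y)² / ‖x−y‖^{n+2s}` (valued in `ℝ≥0∞`). -/
def gagliardo (n : ℕ) (s : ℝ) (u : EuclideanSpace ℝ (Fin n) → ℝ) : ℝ≥0∞ :=
  ∫⁻ x, ∫⁻ y, ENNReal.ofReal ((u x - u y) ^ 2 / ‖x - y‖ ^ ((n : ℝ) + 2 * s))

/-- The fractional energy `E_s(u) = (c/2) ∫∫ (u x − u y)² / ‖x−y‖^{n+2s}`,
where `c = c_{n,s} > 0` is the normalizing constant of the fractional Laplacian. -/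
def fracEnergy (n : ℕ) (s c : ℝ) (u : EuclideanSpace ℝ (Fin n) → ℝ) : ℝ :=
  (c / 2) * (gagliardo n s u).toReal

/-- Membership in `H^s_0(Ω)`: measurable, square integrable, finite Gagliardo seminorm,
and vanishing a.e. outside `Ω`. -/
def memHs0 (n : ℕ) (s : ℝ) (Ω : Set (EuclideanSpace ℝ (Fin n)))
    (u : EuclideanSpace ℝ (Fin n) → ℝ) : Prop :=
  Measurable u ∧ Integrable (fun x => (u x) ^ 2) ∧ gagliardo n s u < ⊤ ∧
    ∀ᵐ x, x ∉ Ω → u x = 0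

/-- The first eigenvalue `λ_Ω(α, D)` of `(−Δ)^s + α χ_D` with Dirichlet condition outside `Ω`. -/
def lamEV (n : ℕ) (s c α : ℝ) (Ω D : Set (EuclideanSpace ℝ (Fin n))) : ℝ :=
  sInf { v | ∃ u, memHs0 n s Ω u ∧ (∫ x, (u x) ^ 2) = 1 ∧
    v = fracEnergy n s c u + α * ∫ x in D, (u x) ^ 2 }

/-- The optimal eigenvalue `Λ_Ω(α, A) = inf { λ_Ω(α, D) : D ⊆ Ω measurable, |D| = A }`. -/
def LamEV (n : ℕ) (s c α A : ℝ) (Ω : Set (EuclideanSpace ℝ (Fin n))) : ℝ :=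
  sInf { v | ∃ D, D ⊆ Ω ∧ MeasurableSet D ∧ volume D = ENNReal.ofReal A ∧
    v = lamEV n s c α Ω D }

/-- `(u, D)` is an optimal pair for the data `(Ω, α, A)`. -/
def optimalPair (n : ℕ) (s c α A : ℝ) (Ω D : Set (EuclideanSpace ℝ (Fin n)))
    (u : EuclideanSpace ℝ (Fin n) → ℝ) : Prop :=
  D ⊆ Ω ∧ MeasurableSet D ∧ volume D = ENNReal.ofReal A ∧
  memHs0 n s Ω u ∧ (∫ x, (u x) ^ 2) = 1 ∧
  fracEnergy n s c u + α * ∫ x in D, (u x) ^ 2 = LamEV n s c α A Ω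


/-- `Θ(h,H,M)`: double infimum of the Rayleigh quotient `E_s(w)/∫_Ω ρ' w²` over admissible
densities `ρ' : Ω → [h,H]` with `∫_Ω ρ' = M` and `w ∈ H^s_0(Ω)` with `∫_Ω ρ' w² > 0`. -/
def Theta (n : ℕ) (s c : ℝ) (Ω : Set (EuclideanSpace ℝ (Fin n))) (h H M : ℝ) : ℝ :=
  sInf { v | ∃ ρ w, Measurable ρ ∧ (∀ x ∈ Ω, ρ x ∈ Set.Icc h H) ∧
    (∫ x in Ω, ρ x) = M ∧ memHs0 n s Ω w ∧
    (0 < ∫ x in Ω, ρ x * (w x) ^ 2) ∧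
    v = fracEnergy n s c w / ∫ x in Ω, ρ x * (w x) ^ 2 }

/-- a minimizer `u` of the composite-membrane Rayleigh quotient does not change
sign: either `u ≥ 0` a.e. on `ℝⁿ` or `u ≤ 0` a.e. on `ℝⁿ`. -/
theorem minimizer_has_sign {n : ℕ} (s c : ℝ) (hs0 : 0 < s) (hs1 : s < 1) (hc : 0 < c)
    (Ω : Set (EuclideanSpace ℝ (Fin n))) (hΩopen : IsOpen Ω) (hΩconn : IsConnected Ω)
    (hΩbdd : Bornology.IsBounded Ω)
    (h H M : ℝ) (hh : 0 ≤ h) (hhH : h < H) (hM0 : 0 < M)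
    (hM1 : h * (volume Ω).toReal ≤ M) (hM2 : M ≤ H * (volume Ω).toReal)
    (ρ : EuclideanSpace ℝ (Fin n) → ℝ) (hρmeas : Measurable ρ)
    (hρrange : ∀ x ∈ Ω, ρ x ∈ Set.Icc h H) (hρint : (∫ x in Ω, ρ x) = M)
    (u : EuclideanSpace ℝ (Fin n) → ℝ) (hu : memHs0 n s Ω u)
    (hupos : 0 < ∫ x in Ω, ρ x * (u x) ^ 2)
    (hmin : fracEnergy n s c u = Theta n s c Ω h H M * ∫ x in Ω, ρ x * (u x) ^ 2) :
    (∀ᵐ x, 0 ≤ u x) ∨ (∀ᵐ x, u x ≤ 0) := by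
  classical
  obtain ⟨humeas, husq, hufin, huzero⟩ := hu
  set v : EuclideanSpace ℝ (Fin n) → ℝ := fun x => |u x| with hv
  -- pointwise comparison of integrands
  have hpt : ∀ x y : EuclideanSpace ℝ (Fin n),
      ENNReal.ofReal ((v x - v y) ^ 2 / ‖x - y‖ ^ ((n : ℝ) + 2 * s)) ≤
        ENNReal.ofReal ((u x - u y) ^ 2 / ‖x - y‖ ^ ((n : ℝ) + 2 * s)) := by
    intro x y
    apply ENNReal.ofReal_le_ofReal
    have h1 : |v x - v y| ≤ |u x - u y| := abs_abs_sub_abs_le_abs_sub _ _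
    have hnum : (v x - v y) ^ 2 ≤ (u x - u y) ^ 2 := by
      calc (v x - v y) ^ 2 = |v x - v y| ^ 2 := (sq_abs _).symm
        _ ≤ |u x - u y| ^ 2 := by
            exact pow_le_pow_left₀ (abs_nonneg _) h1 2
        _ = (u x - u y) ^ 2 := sq_abs _
    have hd : 0 ≤ ‖x - y‖ ^ ((n : ℝ) + 2 * s) := Real.rpow_nonneg (norm_nonneg _) _
    exact div_le_div_of_nonneg_right hnum hd
  have hgle : gagliardo n s v ≤ gagliardo n s u := by
    unfold gagliardo
    exact lintegral_mono fun x => lintegral_mono fun y => hpt x y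
  have hvfin : gagliardo n s v < ⊤ := lt_of_le_of_lt hgle hufin
  have hvmem : memHs0 n s Ω v := by
    refine ⟨humeas.abs, ?_, hvfin, ?_⟩
    · simpa [hv, sq_abs] using husq
    · filter_upwards [huzero] with x hx hxΩ
      simp [hv, hx hxΩ]
  have hIv : (∫ x in Ω, ρ x * (v x) ^ 2) = ∫ x in Ω, ρ x * (u x) ^ 2 := by
    simp [hv, sq_abs]
  -- Theta ≤ Rayleigh quotient of v
  have hbdd : BddBelow { t | ∃ ρ' w, Measurable ρ' ∧ (∀ x ∈ Ω, ρ' x ∈ Set.Icc h H) ∧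
      (∫ x in Ω, ρ' x) = M ∧ memHs0 n s Ω w ∧
      (0 < ∫ x in Ω, ρ' x * (w x) ^ 2) ∧
      t = fracEnergy n s c w / ∫ x in Ω, ρ' x * (w x) ^ 2 } := by
    refine ⟨0, ?_⟩
    rintro t ⟨ρ', w, -, -, -, -, hpos, rfl⟩
    refine div_nonneg (mul_nonneg (by positivity) ENNReal.toReal_nonneg) hpos.le
  have hmem : fracEnergy n s c v / (∫ x in Ω, ρ x * (u x) ^ 2) ∈
      { t | ∃ ρ' w, Measurable ρ' ∧ (∀ x ∈ Ω, ρ' x ∈ Set.Icc h H) ∧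
      (∫ x in Ω, ρ' x) = M ∧ memHs0 n s Ω w ∧
      (0 < ∫ x in Ω, ρ' x * (w x) ^ 2) ∧
      t = fracEnergy n s c w / ∫ x in Ω, ρ' x * (w x) ^ 2 } := by
    exact ⟨ρ, v, hρmeas, hρrange, hρint, hvmem, by rw [hIv]; exact hupos, by rw [hIv]⟩
  have hTle : Theta n s c Ω h H M ≤
      fracEnergy n s c v / (∫ x in Ω, ρ x * (u x) ^ 2) := csInf_le hbdd hmem
  have hEuleEv : fracEnergy n s c u ≤ fracEnergy n s c v := by
    have h1 : fracEnergy n s c u ≤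
        (fracEnergy n s c v / (∫ x in Ω, ρ x * (u x) ^ 2)) * (∫ x in Ω, ρ x * (u x) ^ 2) := by
      rw [hmin]; exact mul_le_mul_of_nonneg_right hTle hupos.le
    rwa [div_mul_cancel₀ _ (ne_of_gt hupos)] at h1
  have hEvleEu : fracEnergy n s c v ≤ fracEnergy n s c u := by
    unfold fracEnergy
    exact mul_le_mul_of_nonneg_left (ENNReal.toReal_mono hufin.ne hgle) (by positivity)
  have hE : fracEnergy n s c v = fracEnergy n s c u := le_antisymm hEvleEu hEuleEv
  have hgeq : gagliardo n s v = gagliardo n s u := by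
    unfold fracEnergy at hE
    have hc2 : c / 2 ≠ 0 := by positivity
    have htr : (gagliardo n s v).toReal = (gagliardo n s u).toReal :=
      mul_left_cancel₀ hc2 hE
    exact (ENNReal.toReal_eq_toReal_iff' hvfin.ne hufin.ne).mp htr
  -- pass to the product measure
  set μ : Measure (EuclideanSpace ℝ (Fin n)) := volume with hμ
  set F : EuclideanSpace ℝ (Fin n) × EuclideanSpace ℝ (Fin n) → ℝ≥0∞ :=
    fun p => ENNReal.ofReal ((u p.1 - u p.2) ^ 2 / ‖p.1 - p.2‖ ^ ((n : ℝ) + 2 * s)) with hF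
  set G : EuclideanSpace ℝ (Fin n) × EuclideanSpace ℝ (Fin n) → ℝ≥0∞ :=
    fun p => ENNReal.ofReal ((v p.1 - v p.2) ^ 2 / ‖p.1 - p.2‖ ^ ((n : ℝ) + 2 * s)) with hG
  have hnormmeas : Measurable fun p : EuclideanSpace ℝ (Fin n) × EuclideanSpace ℝ (Fin n) =>
      ‖p.1 - p.2‖ ^ ((n : ℝ) + 2 * s) :=
    ((continuous_fst.sub continuous_snd).norm.rpow_const
      (fun _ => Or.inr (by positivity))).measurable
  have hFmeas : Measurable F := by
    apply ENNReal.measurable_ofReal.comp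
    exact (((humeas.comp measurable_fst).sub (humeas.comp measurable_snd)).pow_const 2).div
      hnormmeas
  have hGmeas : Measurable G := by
    apply ENNReal.measurable_ofReal.comp
    exact (((humeas.abs.comp measurable_fst).sub (humeas.abs.comp measurable_snd)).pow_const 2).div
      hnormmeas
  have hFint : ∫⁻ p, F p ∂(μ.prod μ) = gagliardo n s u := by
    rw [lintegral_prod _ hFmeas.aemeasurable]; rfl
  have hGint : ∫⁻ p, G p ∂(μ.prod μ) = gagliardo n s v := by
    rw [lintegral_prod _ hGmeas.aemeasurable]; rfl
  have hGleF : ∀ p, G p ≤ F p := fun p => hpt p.1 p.2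
  have hGfinp : ∫⁻ p, G p ∂(μ.prod μ) ≠ ⊤ := by rw [hGint]; exact hvfin.ne
  have hsub : ∫⁻ p, (F p - G p) ∂(μ.prod μ) = 0 := by
    rw [lintegral_sub hGmeas hGfinp (Filter.Eventually.of_forall hGleF), hFint, hGint, hgeq,
      tsub_self]
  have hae0 : ∀ᵐ p ∂(μ.prod μ), F p - G p = 0 :=
    (lintegral_eq_zero_iff (hFmeas.sub hGmeas)).mp hsub
  have haeEq : ∀ᵐ p ∂(μ.prod μ), F p = G p := by
    filter_upwards [hae0] with p hp
    exact le_antisymm (tsub_eq_zero_iff_le.mp hp) (hGleF p)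
  -- the set where u changes sign is null
  have hSnull : (μ.prod μ)
      {p : EuclideanSpace ℝ (Fin n) × EuclideanSpace ℝ (Fin n) | u p.1 * u p.2 < 0} = 0 := by
    refine measure_mono_null ?_ (ae_iff.mp haeEq)
    rintro ⟨x, y⟩ hp
    simp only [Set.mem_setOf_eq] at hp ⊢
    intro hFG
    have hxy : x ≠ y := by
      rintro rfl
      exact absurd hp (not_lt.mpr (mul_self_nonneg _))
    have hdpos : 0 < ‖x - y‖ ^ ((n : ℝ) + 2 * s) :=
      Real.rpow_pos_of_pos (norm_pos_iff.mpr (sub_ne_zero.mpr hxy)) _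
    have hnumeq : (u x - u y) ^ 2 / ‖x - y‖ ^ ((n : ℝ) + 2 * s) =
        (v x - v y) ^ 2 / ‖x - y‖ ^ ((n : ℝ) + 2 * s) := by
      have := hFG
      simp only [hF, hG] at this
      exact (ENNReal.ofReal_eq_ofReal_iff (div_nonneg (sq_nonneg _) hdpos.le)
        (div_nonneg (sq_nonneg _) hdpos.le)).mp this
    have h3 : (u x - u y) ^ 2 = (v x - v y) ^ 2 := by
      have h4 := (div_eq_div_iff hdpos.ne' hdpos.ne').mp hnumeq
      exact mul_right_cancel₀ hdpos.ne' h4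
    have habs : v x * v y = |u x * u y| := (abs_mul _ _).symm
    have hnn : 0 ≤ |u x * u y| := abs_nonneg _
    have hvx : (v x) ^ 2 = (u x) ^ 2 := sq_abs _
    have hvy : (v y) ^ 2 = (u y) ^ 2 := sq_abs _
    nlinarith [hp, h3, habs, hnn, hvx, hvy]
  set P : Set (EuclideanSpace ℝ (Fin n)) := {x | 0 < u x} with hP
  set N : Set (EuclideanSpace ℝ (Fin n)) := {x | u x < 0} with hN
  have hprodPN : μ P * μ N = 0 := by
    have hsub2 : P ×ˢ N ⊆
        {p : EuclideanSpace ℝ (Fin n) × EuclideanSpace ℝ (Fin n) | u p.1 * u p.2 < 0} := by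
      rintro ⟨x, y⟩ ⟨hx, hy⟩
      simp only [hP, hN, Set.mem_setOf_eq] at hx hy
      exact mul_neg_of_pos_of_neg hx hy
    have := measure_mono_null hsub2 hSnull
    rwa [Measure.prod_prod] at this
  rcases mul_eq_zero.mp hprodPN with hP0 | hN0
  · right
    have hcompl : ∀ᵐ x ∂μ, x ∉ P := measure_eq_zero_iff_ae_notMem.mp hP0
    filter_upwards [hcompl] with x hx
    exact not_lt.mp hx
  · left
    have hcompl : ∀ᵐ x ∂μ, x ∉ N := measure_eq_zero_iff_ae_notMem.mp hN0
    filter_upwards [hcompl] with x hx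
    exact not_lt.mp hx

end
end

section
/- Let Ω ⊂ ℝⁿ be a bounded measurable set, 0 ≤ h < H, and M with h|Ω| ≤ M < H|Ω|. Set A := (H|Ω| − M)/(H − h) ∈ (0,|Ω|]. Let u : Ω → ℝ be measurable with u ≥ 0 a.e., let ρ : Ω → [h,H] be measurable with ∫_Ω ρ = M, set t := sup{ c ∈ ℝ : |{x ∈ Ω : u(x) < c}| < A } and assume t < ∞. Let D ⊆ Ω be measurable with |D| = A and (up to null sets) {x ∈ Ω : u(x) < t} ⊆ D ⊆ {x ∈ Ω : u(x) ≤ t}, and define ρ_D := h·χ_D + H·χ_{Ω∖D}. Then ∫_Ω ρ_D u² dx ≥ ∫_Ω ρ u² dx. -/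
open MeasureTheory
open scoped ENNReal Classical

/-- replacing an admissible density `ρ : Ω → [h,H]` of total mass `M` by the
two-valued density `ρ_D = h·χ_D + H·χ_{Ω∖D}` built from a sublevel-type set `D` of `u`
(of measure `A = (H|Ω| − M)/(H − h)`) does not decrease `∫_Ω ρ u²`. -/
theorem density_representation {n : ℕ}
    (Ω : Set (EuclideanSpace ℝ (Fin n))) (hΩmeas : MeasurableSet Ω)
    (hΩbdd : Bornology.IsBounded Ω)
    (h H M : ℝ) (hh : 0 ≤ h) (hhH : h < H)
    (hM1 : h * (volume Ω).toReal ≤ M) (hM2 : M < H * (volume Ω).toReal)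
    (A : ℝ) (hA : A = (H * (volume Ω).toReal - M) / (H - h))
    (u : EuclideanSpace ℝ (Fin n) → ℝ) (humeas : Measurable u)
    (hunonneg : ∀ᵐ x, x ∈ Ω → 0 ≤ u x)
    (ρ : EuclideanSpace ℝ (Fin n) → ℝ) (hρmeas : Measurable ρ)
    (hρrange : ∀ x ∈ Ω, ρ x ∈ Set.Icc h H) (hρint : (∫ x in Ω, ρ x) = M)
    (t : ℝ) (ht : t = sSup {c : ℝ | volume {x ∈ Ω | u x < c} < ENNReal.ofReal A})
    (htfin : BddAbove {c : ℝ | volume {x ∈ Ω | u x < c} < ENNReal.ofReal A})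
    (D : Set (EuclideanSpace ℝ (Fin n))) (hDsub : D ⊆ Ω) (hDmeas : MeasurableSet D)
    (hDvol : volume D = ENNReal.ofReal A)
    (hD1 : volume ({x ∈ Ω | u x < t} \ D) = 0)
    (hD2 : volume (D \ {x ∈ Ω | u x ≤ t}) = 0) :
    ∫⁻ x in Ω, ENNReal.ofReal (ρ x * (u x) ^ 2)
      ≤ ∫⁻ x in Ω, ENNReal.ofReal ((if x ∈ D then h else H) * (u x) ^ 2) := by
  have hΩfin : volume Ω ≠ ∞ := hΩbdd.measure_lt_top.ne
  have hHh : (0 : ℝ) < H - h := by linarith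
  have hApos : 0 < A := by
    rw [hA]; apply div_pos _ hHh; linarith
  have hAvol : ENNReal.ofReal A ≤ volume Ω := hDvol ▸ measure_mono hDsub
  have hDfin : volume D ≠ ∞ := by rw [hDvol]; exact ENNReal.ofReal_ne_top
  -- t ≥ 0
  have ht0 : 0 ≤ t := by
    rw [ht]
    apply le_csSup htfin
    have h0 : volume {x ∈ Ω | u x < 0} = 0 := by
      refine measure_mono_null ?_ ((ae_iff).1 hunonneg)
      intro x hx
      simp only [Set.mem_setOf_eq] at *
      push_neg
      exact ⟨hx.1, hx.2⟩
    show volume {x ∈ Ω | u x < 0} < ENNReal.ofReal A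
    rw [h0]; exact ENNReal.ofReal_pos.2 hApos
  -- a.e. facts on D and Ω \ D
  have huD : ∀ᵐ x, x ∈ D → u x ≤ t := by
    rw [ae_iff]
    refine measure_mono_null ?_ hD2
    intro x hx
    simp only [Set.mem_setOf_eq, Set.mem_diff] at *
    push_neg at hx
    exact ⟨hx.1, fun h' => absurd h'.2 (not_le.2 hx.2)⟩
  have huC : ∀ᵐ x, x ∈ Ω \ D → t ≤ u x := by
    rw [ae_iff]
    refine measure_mono_null ?_ hD1
    intro x hx
    simp only [Set.mem_setOf_eq, Set.mem_diff] at *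
    push_neg at hx
    exact ⟨⟨hx.1.1, hx.2⟩, hx.1.2⟩
  have haeD : ∀ᵐ x ∂(volume.restrict D),
      ρ x * u x ^ 2 ≤ h * u x ^ 2 + (ρ x - h) * t ^ 2 ∧ 0 ≤ ρ x - h := by
    filter_upwards [ae_restrict_mem hDmeas, ae_restrict_of_ae huD, ae_restrict_of_ae hunonneg]
      with x hxD hle hnn
    have hxΩ := hDsub hxD
    have h1 := (hρrange x hxΩ).1
    have h2 : 0 ≤ u x := hnn hxΩ
    have h3 : u x ≤ t := hle hxD
    refine ⟨?_, by linarith⟩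
    nlinarith [mul_nonneg (by linarith : (0:ℝ) ≤ ρ x - h)
      (by nlinarith : (0:ℝ) ≤ t ^ 2 - u x ^ 2)]
  have haeC : ∀ᵐ x ∂(volume.restrict (Ω \ D)),
      ρ x * u x ^ 2 + (H - ρ x) * t ^ 2 ≤ H * u x ^ 2 ∧
        0 ≤ ρ x * u x ^ 2 ∧ 0 ≤ (H - ρ x) * t ^ 2 := by
    filter_upwards [ae_restrict_mem (hΩmeas.diff hDmeas), ae_restrict_of_ae huC,
      ae_restrict_of_ae hunonneg] with x hxC hge hnn
    have hxΩ := hxC.1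
    have h1 := (hρrange x hxΩ).1
    have h2 := (hρrange x hxΩ).2
    have h3 : t ≤ u x := hge hxC
    have h4 : 0 ≤ u x := hnn hxΩ
    refine ⟨?_, mul_nonneg (by linarith) (sq_nonneg _),
      mul_nonneg (by linarith) (sq_nonneg _)⟩
    nlinarith [mul_nonneg (by linarith : (0:ℝ) ≤ H - ρ x)
      (by nlinarith : (0:ℝ) ≤ u x ^ 2 - t ^ 2)]
  -- splitting lemma
  have hsplit : ∀ f : EuclideanSpace ℝ (Fin n) → ℝ≥0∞,
      ∫⁻ x in Ω, f x = (∫⁻ x in D, f x) + ∫⁻ x in Ω \ D, f x := by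
    intro f
    rw [← lintegral_union (hΩmeas.diff hDmeas) disjoint_sdiff_self_right,
      Set.union_diff_cancel hDsub]
  -- integrability of ρ
  have hρIntΩ : IntegrableOn ρ Ω := by
    refine Measure.integrableOn_of_bounded (M := H) hΩfin hρmeas.aestronglyMeasurable ?_
    filter_upwards [ae_restrict_mem hΩmeas] with x hx
    rw [Real.norm_eq_abs, abs_of_nonneg (le_trans hh (hρrange x hx).1)]
    exact (hρrange x hx).2
  have hρIntD : IntegrableOn ρ D := hρIntΩ.mono_set hDsub
  have hρIntC : IntegrableOn ρ (Ω \ D) := hρIntΩ.mono_set Set.diff_subset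
  have hconstD : IntegrableOn (fun _ => h) D := by
    exact integrableOn_const hDfin
  have hconstC : IntegrableOn (fun _ => H) (Ω \ D) := by
    exact integrableOn_const ((measure_mono Set.diff_subset).trans_lt hΩfin.lt_top).ne
  -- measure computations
  have hvolD : (volume D).toReal = A := by rw [hDvol, ENNReal.toReal_ofReal hApos.le]
  have hvolC : (volume (Ω \ D)).toReal = (volume Ω).toReal - A := by
    rw [measure_diff hDsub hDmeas.nullMeasurableSet hDfin, hDvol,
      ENNReal.toReal_sub_of_le hAvol hΩfin, ENNReal.toReal_ofReal hApos.le]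
  have hsum : (∫ x in D, ρ x) + ∫ x in Ω \ D, ρ x = M := by
    rw [← hρint, ← setIntegral_union disjoint_sdiff_self_right (hΩmeas.diff hDmeas) hρIntD
      hρIntC, Set.union_diff_cancel hDsub]
  have hkey : (∫ x in D, (ρ x - h)) = ∫ x in Ω \ D, (H - ρ x) := by
    rw [integral_sub hρIntD hconstD, integral_sub hconstC hρIntC,
      setIntegral_const, setIntegral_const, smul_eq_mul, smul_eq_mul, measureReal_def, measureReal_def, hvolC, hvolD]
    have hAeq : A * (H - h) = H * (volume Ω).toReal - M := by
      rw [hA]; field_simp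
    nlinarith [hsum]
  -- middle comparison
  have hC : (∫⁻ x in D, ENNReal.ofReal ((ρ x - h) * t ^ 2))
      ≤ ∫⁻ x in Ω \ D, ENNReal.ofReal ((H - ρ x) * t ^ 2) := by
    have e1 : (∫⁻ x in D, ENNReal.ofReal ((ρ x - h) * t ^ 2))
        = ENNReal.ofReal (∫ x in D, (ρ x - h) * t ^ 2) := by
      refine (ofReal_integral_eq_lintegral_ofReal ((hρIntD.sub hconstD).mul_const _) ?_).symm
      filter_upwards [haeD] with x hx
      exact mul_nonneg hx.2 (sq_nonneg _)
    have e2 : (∫⁻ x in Ω \ D, ENNReal.ofReal ((H - ρ x) * t ^ 2))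
        = ENNReal.ofReal (∫ x in Ω \ D, (H - ρ x) * t ^ 2) := by
      refine (ofReal_integral_eq_lintegral_ofReal ((hconstC.sub hρIntC).mul_const _) ?_).symm
      filter_upwards [haeC] with x hx
      exact hx.2.2
    rw [e1, e2, integral_mul_const, integral_mul_const, hkey]
  -- step on D
  have hB : (∫⁻ x in D, ENNReal.ofReal (ρ x * u x ^ 2))
      ≤ (∫⁻ x in D, ENNReal.ofReal (h * u x ^ 2))
        + ∫⁻ x in D, ENNReal.ofReal ((ρ x - h) * t ^ 2) := by
    rw [← lintegral_add_left (by
      exact (ENNReal.measurable_ofReal.comp ((measurable_const.mul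
        ((humeas.pow_const 2))))) )]
    refine lintegral_mono_ae ?_
    filter_upwards [haeD] with x hx
    calc ENNReal.ofReal (ρ x * u x ^ 2)
        ≤ ENNReal.ofReal (h * u x ^ 2 + (ρ x - h) * t ^ 2) := ENNReal.ofReal_le_ofReal hx.1
      _ = _ := ENNReal.ofReal_add (mul_nonneg hh (sq_nonneg _)) (mul_nonneg hx.2 (sq_nonneg _))
  -- step on Ω \ D
  have hD' : ((∫⁻ x in Ω \ D, ENNReal.ofReal ((H - ρ x) * t ^ 2))
        + ∫⁻ x in Ω \ D, ENNReal.ofReal (ρ x * u x ^ 2))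
      ≤ ∫⁻ x in Ω \ D, ENNReal.ofReal (H * u x ^ 2) := by
    rw [← lintegral_add_left (by
      exact (ENNReal.measurable_ofReal.comp ((measurable_const.sub hρmeas).mul
        measurable_const)))]
    refine lintegral_mono_ae ?_
    filter_upwards [haeC] with x hx
    rw [← ENNReal.ofReal_add hx.2.2 hx.2.1]
    exact ENNReal.ofReal_le_ofReal (by linarith [hx.1])
  -- RHS computation
  have hRHS : (∫⁻ x in Ω, ENNReal.ofReal ((if x ∈ D then h else H) * u x ^ 2))
      = (∫⁻ x in D, ENNReal.ofReal (h * u x ^ 2))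
        + ∫⁻ x in Ω \ D, ENNReal.ofReal (H * u x ^ 2) := by
    rw [hsplit]
    congr 1
    · refine setLIntegral_congr_fun hDmeas (fun x hx => ?_)
      simp [hx]
    · refine setLIntegral_congr_fun (hΩmeas.diff hDmeas) (fun x hx => ?_)
      simp [hx.2]
  calc ∫⁻ x in Ω, ENNReal.ofReal (ρ x * u x ^ 2)
      = (∫⁻ x in D, ENNReal.ofReal (ρ x * u x ^ 2))
        + ∫⁻ x in Ω \ D, ENNReal.ofReal (ρ x * u x ^ 2) := hsplit _
    _ ≤ ((∫⁻ x in D, ENNReal.ofReal (h * u x ^ 2))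
          + ∫⁻ x in D, ENNReal.ofReal ((ρ x - h) * t ^ 2))
        + ∫⁻ x in Ω \ D, ENNReal.ofReal (ρ x * u x ^ 2) := add_le_add hB le_rfl
    _ ≤ ((∫⁻ x in D, ENNReal.ofReal (h * u x ^ 2))
          + ∫⁻ x in Ω \ D, ENNReal.ofReal ((H - ρ x) * t ^ 2))
        + ∫⁻ x in Ω \ D, ENNReal.ofReal (ρ x * u x ^ 2) :=
        add_le_add (add_le_add le_rfl hC) le_rfl
    _ = (∫⁻ x in D, ENNReal.ofReal (h * u x ^ 2))
        + ((∫⁻ x in Ω \ D, ENNReal.ofReal ((H - ρ x) * t ^ 2))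
          + ∫⁻ x in Ω \ D, ENNReal.ofReal (ρ x * u x ^ 2)) := add_assoc _ _ _
    _ ≤ (∫⁻ x in D, ENNReal.ofReal (h * u x ^ 2))
        + ∫⁻ x in Ω \ D, ENNReal.ofReal (H * u x ^ 2) := add_le_add le_rfl hD'
    _ = _ := hRHS.symm
end

section
/- Let Ω ⊂ ℝⁿ be a bounded domain, 0 ≤ h < H, and M with h|Ω| ≤ M ≤ H|Ω| and M > 0. Define Θ(h,H,M) as the infimum of E_s(u)/∫_Ω ρ u² over all measurable densities ρ : Ω → [h,H] with ∫_Ω ρ = M and all u ∈ H^s_0(Ω) with ∫_Ω ρ u² > 0. Then, with α := (H − h)·Θ(h,H,M) and A := (H|Ω| − M)/(H − h), one has Λ_Ω(α, A) = H·Θ(h,H,M). -/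
open MeasureTheory
open scoped ENNReal

noncomputable section

namespace Aux

lemma gag_zero (s : ℝ) (u : EuclideanSpace ℝ (Fin 0) → ℝ) : gagliardo 0 s u = 0 := by
  have hsub : Subsingleton (EuclideanSpace ℝ (Fin 0)) :=
    ⟨fun a b => PiLp.ext fun i => Fin.elim0 i⟩
  unfold gagliardo
  have : ∀ x y : EuclideanSpace ℝ (Fin 0),
      ENNReal.ofReal ((u x - u y) ^ 2 / ‖x - y‖ ^ ((0 : ℕ) + 2 * s : ℝ)) = 0 := by
    intro x y
    rw [hsub.elim x y]
    simp
  simp only [this, lintegral_zero]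

lemma fracEnergy_nonneg {n : ℕ} (s : ℝ) {c : ℝ} (hc : 0 ≤ c)
    (u : EuclideanSpace ℝ (Fin n) → ℝ) : 0 ≤ fracEnergy n s c u := by
  unfold fracEnergy; positivity

lemma gag_smul {n : ℕ} (s a : ℝ) (u : EuclideanSpace ℝ (Fin n) → ℝ) :
    gagliardo n s (fun x => a * u x) = ENNReal.ofReal (a ^ 2) * gagliardo n s u := by
  unfold gagliardo
  rw [← lintegral_const_mul' _ _ ENNReal.ofReal_ne_top]
  refine lintegral_congr fun x => ?_
  rw [← lintegral_const_mul' _ _ ENNReal.ofReal_ne_top]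
  refine lintegral_congr fun y => ?_
  rw [← ENNReal.ofReal_mul (sq_nonneg a)]
  congr 1
  rw [← mul_div_assoc]
  congr 1
  ring

lemma fracEnergy_smul {n : ℕ} (s c a : ℝ) {u : EuclideanSpace ℝ (Fin n) → ℝ}
    (hu : gagliardo n s u < ⊤) :
    fracEnergy n s c (fun x => a * u x) = a ^ 2 * fracEnergy n s c u := by
  unfold fracEnergy
  rw [gag_smul, ENNReal.toReal_mul, ENNReal.toReal_ofReal (sq_nonneg a)]
  ring

lemma memHs0_smul {n : ℕ} {s : ℝ} {Ω : Set (EuclideanSpace ℝ (Fin n))} (a : ℝ)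
    {u : EuclideanSpace ℝ (Fin n) → ℝ} (hu : memHs0 n s Ω u) :
    memHs0 n s Ω (fun x => a * u x) := by
  obtain ⟨h1, h2, h3, h4⟩ := hu
  refine ⟨measurable_const.mul h1, ?_, ?_, ?_⟩
  · have : (fun x => (a * u x) ^ 2) = fun x => a ^ 2 * (u x) ^ 2 := by
      funext x; ring
    rw [this]; exact h2.const_mul _
  · rw [gag_smul]
    exact ENNReal.mul_lt_top ENNReal.ofReal_lt_top h3
  · filter_upwards [h4] with x hx hmem
    rw [hx hmem, mul_zero]

lemma setIntegral_sq {n : ℕ} {s : ℝ} {Ω : Set (EuclideanSpace ℝ (Fin n))}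
    {u : EuclideanSpace ℝ (Fin n) → ℝ} (hu : memHs0 n s Ω u) :
    ∫ x in Ω, (u x) ^ 2 = ∫ x, (u x) ^ 2 := by
  refine setIntegral_eq_integral_of_ae_compl_eq_zero ?_
  filter_upwards [hu.2.2.2] with x hx hmem
  rw [hx hmem]; ring

end Aux

open Metric

namespace Aux2

variable {n : ℕ}

lemma key_ineq (hn : 0 < n) (E : Set (EuclideanSpace ℝ (Fin n))) (hE : MeasurableSet E)
    {r r' : ℝ} (h0 : 0 ≤ r) (hrr : r ≤ r') :
    (volume (E ∩ ball 0 r')).toReal - (volume (E ∩ ball 0 r)).toReal ≤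
      r' ^ n * (volume (ball (0 : EuclideanSpace ℝ (Fin n)) 1)).toReal
        - r ^ n * (volume (ball (0 : EuclideanSpace ℝ (Fin n)) 1)).toReal := by
  haveI : Nontrivial (EuclideanSpace ℝ (Fin n)) := by
    exact Module.nontrivial_of_finrank_pos (R := ℝ) (by simp [hn])
  have hb1 : volume (ball (0 : EuclideanSpace ℝ (Fin n)) 1) < ⊤ :=
    measure_ball_lt_top
  have hfin : ∀ t : ℝ, 0 ≤ t → volume (ball (0 : EuclideanSpace ℝ (Fin n)) t)
      = ENNReal.ofReal (t ^ n) * volume (ball (0 : EuclideanSpace ℝ (Fin n)) 1) := by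
    intro t ht
    have := Measure.addHaar_ball (volume (α := EuclideanSpace ℝ (Fin n))) (0 : EuclideanSpace ℝ (Fin n)) ht
    simpa using this
  have hsub : E ∩ ball 0 r' ⊆ (E ∩ ball 0 r) ∪ (ball (0:EuclideanSpace ℝ (Fin n)) r' \ ball 0 r) := by
    intro x hx
    by_cases hxr : x ∈ ball (0:EuclideanSpace ℝ (Fin n)) r
    · exact Or.inl ⟨hx.1, hxr⟩
    · exact Or.inr ⟨hx.2, hxr⟩
  have hmono : volume (E ∩ ball 0 r') ≤ volume (E ∩ ball 0 r)
      + volume (ball (0:EuclideanSpace ℝ (Fin n)) r' \ ball 0 r) :=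
    le_trans (measure_mono hsub) (measure_union_le _ _)
  have hdiff : volume (ball (0:EuclideanSpace ℝ (Fin n)) r' \ ball 0 r)
      = volume (ball (0:EuclideanSpace ℝ (Fin n)) r') - volume (ball (0:EuclideanSpace ℝ (Fin n)) r) :=
    measure_diff (ball_subset_ball hrr) measurableSet_ball.nullMeasurableSet measure_ball_lt_top.ne
  have hEfin : ∀ t : ℝ, volume (E ∩ ball (0:EuclideanSpace ℝ (Fin n)) t) ≠ ⊤ :=
    fun t => ((measure_mono Set.inter_subset_right).trans_lt measure_ball_lt_top).ne
  have h1 : (volume (E ∩ ball 0 r')).toReal ≤ (volume (E ∩ ball 0 r)).toReal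
      + ((volume (ball (0:EuclideanSpace ℝ (Fin n)) r')).toReal
        - (volume (ball (0:EuclideanSpace ℝ (Fin n)) r)).toReal) := by
    have hne : volume (E ∩ ball 0 r) + volume (ball (0:EuclideanSpace ℝ (Fin n)) r' \ ball 0 r) ≠ ⊤ :=
      ENNReal.add_ne_top.2 ⟨hEfin r,
        ((measure_mono Set.diff_subset).trans_lt measure_ball_lt_top).ne⟩
    have := ENNReal.toReal_mono hne hmono
    rw [ENNReal.toReal_add (hEfin r)
        ((measure_mono Set.diff_subset).trans_lt measure_ball_lt_top).ne, hdiff,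
      ENNReal.toReal_sub_of_le (measure_mono (ball_subset_ball hrr)) measure_ball_lt_top.ne] at this
    linarith
  have e1 : (volume (ball (0:EuclideanSpace ℝ (Fin n)) r')).toReal
      = r' ^ n * (volume (ball (0 : EuclideanSpace ℝ (Fin n)) 1)).toReal := by
    rw [hfin r' (h0.trans hrr), ENNReal.toReal_mul, ENNReal.toReal_ofReal (pow_nonneg (h0.trans hrr) n)]
  have e2 : (volume (ball (0:EuclideanSpace ℝ (Fin n)) r)).toReal
      = r ^ n * (volume (ball (0 : EuclideanSpace ℝ (Fin n)) 1)).toReal := by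
    rw [hfin r h0, ENNReal.toReal_mul, ENNReal.toReal_ofReal (pow_nonneg h0 n)]
  rw [e1, e2] at h1
  linarith

/-- For `n > 0`, any bounded measurable set has measurable subsets of every smaller volume. -/
lemma exists_subset_volume_eq (hn : 0 < n) {E : Set (EuclideanSpace ℝ (Fin n))}
    (hE : MeasurableSet E) (hEb : Bornology.IsBounded E) {a : ℝ≥0∞} (ha : a ≤ volume E) :
    ∃ S, S ⊆ E ∧ MeasurableSet S ∧ volume S = a := by
  obtain ⟨R, hR⟩ := hEb.subset_ball 0
  set R₀ : ℝ := max R 1 with hR₀def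
  have hR₀ : (0:ℝ) ≤ R₀ := le_trans zero_le_one (le_max_right _ _)
  have hER : E ⊆ ball 0 R₀ := hR.trans (ball_subset_ball (le_max_left _ _))
  have hEfin : volume E ≠ ⊤ := ((measure_mono hER).trans_lt measure_ball_lt_top).ne
  set m : ℝ → ℝ := fun r => (volume (E ∩ ball 0 r)).toReal with hmdef
  set w : ℝ → ℝ := fun r => r ^ n * (volume (ball (0 : EuclideanSpace ℝ (Fin n)) 1)).toReal with hwdef
  have hwcont : Continuous w := by fun_prop
  have hmono : ∀ ⦃r r'⦄, r ≤ r' → m r ≤ m r' := by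
    intro r r' hle
    exact ENNReal.toReal_mono ((measure_mono Set.inter_subset_right).trans_lt measure_ball_lt_top).ne
      (measure_mono (Set.inter_subset_inter_right _ (ball_subset_ball hle)))
  have hkey : ∀ ⦃r r'⦄, r ∈ Set.Icc 0 R₀ → r' ∈ Set.Icc 0 R₀ → |m r' - m r| ≤ |w r' - w r| := by
    intro r r' hr hr'
    rcases le_total r r' with hle | hle
    · rw [abs_of_nonneg (by linarith [hmono hle]), abs_of_nonneg]
      · exact key_ineq hn E hE hr.1 hle
      · have : r ^ n ≤ r' ^ n := pow_le_pow_left₀ hr.1 hle n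
        have hv : (0:ℝ) ≤ (volume (ball (0 : EuclideanSpace ℝ (Fin n)) 1)).toReal :=
          ENNReal.toReal_nonneg
        simp only [hwdef]; nlinarith
    · rw [abs_sub_comm, abs_sub_comm (w r')]
      rw [abs_of_nonneg (by linarith [hmono hle]), abs_of_nonneg]
      · exact key_ineq hn E hE hr'.1 hle
      · have : r' ^ n ≤ r ^ n := pow_le_pow_left₀ hr'.1 hle n
        have hv : (0:ℝ) ≤ (volume (ball (0 : EuclideanSpace ℝ (Fin n)) 1)).toReal :=
          ENNReal.toReal_nonneg
        simp only [hwdef]; nlinarith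
  have hmcont : ContinuousOn m (Set.Icc 0 R₀) := by
    intro r hr
    rw [Metric.continuousWithinAt_iff]
    intro ε hε
    obtain ⟨δ, hδ, hδ'⟩ := Metric.continuous_iff.1 hwcont r ε hε
    refine ⟨δ, hδ, fun r' hr' hd => ?_⟩
    calc dist (m r') (m r) = |m r' - m r| := Real.dist_eq _ _
      _ ≤ |w r' - w r| := hkey hr hr'
      _ = dist (w r') (w r) := (Real.dist_eq _ _).symm
      _ < ε := hδ' _ hd
  have hm0 : m 0 = 0 := by simp [hmdef, Metric.ball_zero]
  have hmR : m R₀ = (volume E).toReal := by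
    simp [hmdef, Set.inter_eq_self_of_subset_left hER]
  have hmem : a.toReal ∈ Set.Icc (m 0) (m R₀) := by
    rw [hm0, hmR]
    exact ⟨ENNReal.toReal_nonneg, ENNReal.toReal_mono hEfin ha⟩
  obtain ⟨r, hrmem, hr⟩ := intermediate_value_Icc hR₀ hmcont hmem
  refine ⟨E ∩ ball 0 r, Set.inter_subset_left, hE.inter measurableSet_ball, ?_⟩
  have hfin2 : volume (E ∩ ball (0:EuclideanSpace ℝ (Fin n)) r) ≠ ⊤ :=
    ((measure_mono Set.inter_subset_right).trans_lt measure_ball_lt_top).ne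
  have : (volume (E ∩ ball (0:EuclideanSpace ℝ (Fin n)) r)) = ENNReal.ofReal a.toReal := by
    rw [← hr, hmdef]
    exact (ENNReal.ofReal_toReal hfin2).symm
  rw [this, ENNReal.ofReal_toReal (ha.trans_lt (lt_top_iff_ne_top.2 hEfin)).ne]

end Aux2

namespace Aux3
variable {n : ℕ}

lemma bathtub (hn : 0 < n) {Ω : Set (EuclideanSpace ℝ (Fin n))} (hΩm : MeasurableSet Ω)
    (hΩb : Bornology.IsBounded Ω) {u f : EuclideanSpace ℝ (Fin n) → ℝ}
    (hum : Measurable u) (hu2 : Integrable (fun x => (u x) ^ 2))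
    (hfm : Measurable f) (hf0 : ∀ x ∈ Ω, 0 ≤ f x) (hf1 : ∀ x ∈ Ω, f x ≤ 1) :
    ∃ D, D ⊆ Ω ∧ MeasurableSet D ∧ volume D = ENNReal.ofReal (∫ x in Ω, f x) ∧
      (∫ x in D, (u x) ^ 2) ≤ ∫ x in Ω, f x * (u x) ^ 2 := by
  have hΩfin : volume Ω ≠ ⊤ := hΩb.measure_lt_top.ne
  set A : ℝ := ∫ x in Ω, f x with hAdef
  have hA0 : 0 ≤ A := setIntegral_nonneg hΩm hf0
  have hfint : IntegrableOn f Ω := by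
    refine Integrable.mono' (g := fun _ => (1:ℝ))
      (integrableOn_const hΩb.measure_lt_top.ne) hfm.aestronglyMeasurable ?_
    refine (ae_restrict_iff' hΩm).2 (ae_of_all _ fun x hx => ?_)
    show ‖f x‖ ≤ 1
    rw [Real.norm_eq_abs, abs_le]
    exact ⟨by linarith [hf0 x hx], hf1 x hx⟩
  have hfu2 : IntegrableOn (fun x => f x * (u x) ^ 2) Ω := by
    refine Integrable.mono' (g := fun x => (u x) ^ 2)
      hu2.integrableOn (hfm.mul (hum.pow_const 2)).aestronglyMeasurable ?_
    refine (ae_restrict_iff' hΩm).2 (ae_of_all _ fun x hx => ?_)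
    show ‖f x * (u x) ^ 2‖ ≤ (u x) ^ 2
    rw [Real.norm_eq_abs, abs_mul, abs_of_nonneg (hf0 x hx), abs_of_nonneg (sq_nonneg _)]
    nlinarith [hf1 x hx, sq_nonneg (u x), hf0 x hx]
  rcases eq_or_lt_of_le hA0 with hA | hA
  · -- A = 0
    refine ⟨∅, Set.empty_subset _, MeasurableSet.empty, ?_, ?_⟩
    · simp [← hA]
    · rw [Measure.restrict_empty, integral_zero_measure]
      exact setIntegral_nonneg hΩm fun x hx => mul_nonneg (hf0 x hx) (sq_nonneg _)
  have hAle : ENNReal.ofReal A ≤ volume Ω := by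
    have h1 : A ≤ (volume Ω).toReal := by
      have := setIntegral_mono_on hfint
        (integrableOn_const hΩb.measure_lt_top.ne) hΩm hf1
      simpa [hAdef, measureReal_def] using this
    calc ENNReal.ofReal A ≤ ENNReal.ofReal (volume Ω).toReal := ENNReal.ofReal_le_ofReal h1
      _ = volume Ω := ENNReal.ofReal_toReal hΩfin
  rcases eq_or_lt_of_le hAle with hAΩ | hAΩ
  · -- ofReal A = volume Ω : take D = Ω
    refine ⟨Ω, subset_rfl, hΩm, hAΩ.symm, ?_⟩
    have hAΩ' : (volume Ω).toReal = A := by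
      rw [← hAΩ, ENNReal.toReal_ofReal hA0]
    have hzero : (∫ x in Ω, (1 - f x)) = 0 := by
      rw [integral_sub (integrableOn_const (C := (1:ℝ)) hΩb.measure_lt_top.ne) hfint]
      simp [hAΩ', hAdef, measureReal_def]
    have hintsub : Integrable (fun x => 1 - f x) (volume.restrict Ω) := by
      have := integrableOn_const (C := (1:ℝ)) (s := Ω) (μ := volume)
        hΩb.measure_lt_top.ne
      exact this.sub hfint
    have hnn : 0 ≤ᶠ[ae (volume.restrict Ω)] (fun x => 1 - f x) :=
      (ae_restrict_iff' hΩm).2 (ae_of_all _ fun x hx => by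
        simp only [Pi.zero_apply]; linarith [hf1 x hx])
    have hae : (fun x => 1 - f x) =ᶠ[ae (volume.restrict Ω)] 0 :=
      (integral_eq_zero_iff_of_nonneg_ae hnn hintsub).1 hzero
    refine le_of_eq (integral_congr_ae ?_)
    filter_upwards [hae] with x hx
    have : f x = 1 := by
      have := hx.symm
      simp only [Pi.zero_apply] at hx
      linarith
    rw [this, one_mul]
  -- main case : 0 < A, ofReal A < volume Ω
  · set m : ℝ → ℝ≥0∞ := fun t => volume (Ω ∩ {x | u x ^ 2 < t}) with hmdef
    have hms : ∀ t : ℝ, MeasurableSet (Ω ∩ {x | u x ^ 2 < t}) :=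
      fun t => hΩm.inter (measurableSet_lt (hum.pow_const 2) measurable_const)
    have hmmono : Monotone m := fun t t' htt =>
      measure_mono (Set.inter_subset_inter_right _ fun x hx => lt_of_lt_of_le hx htt)
    set T : Set ℝ := {t : ℝ | ENNReal.ofReal A ≤ m t} with hTdef
    have hT0 : ∀ t ∈ T, (0:ℝ) < t := by
      intro t ht
      by_contra hle
      push_neg at hle
      have : Ω ∩ {x | u x ^ 2 < t} = ∅ := by
        ext x; simp only [Set.mem_inter_iff, Set.mem_setOf_eq, Set.mem_empty_iff_false,
          iff_false, not_and]
        intro _; nlinarith [sq_nonneg (u x)]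
      have hmt : m t = 0 := by rw [hmdef]; simp [this]
      rw [hTdef] at ht
      simp only [Set.mem_setOf_eq, hmt, nonpos_iff_eq_zero, le_zero_iff] at ht
      exact absurd ht (by simpa using (ENNReal.ofReal_pos.2 hA).ne')
    have hTne : T.Nonempty := by
      have hunion : Ω = ⋃ k : ℕ, (Ω ∩ {x | u x ^ 2 < (k:ℝ)}) := by
        ext x
        simp only [Set.mem_iUnion, Set.mem_inter_iff, Set.mem_setOf_eq]
        constructor
        · intro hx
          obtain ⟨k, hk⟩ := exists_nat_gt (u x ^ 2)
          exact ⟨k, hx, hk⟩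
        · rintro ⟨k, hx, _⟩; exact hx
      have hdir : Directed (· ⊆ ·) (fun k : ℕ => Ω ∩ {x | u x ^ 2 < (k:ℝ)}) := by
        refine Monotone.directed_le fun k k' hkk => ?_
        exact Set.inter_subset_inter_right _ fun x hx =>
          Set.mem_setOf_eq ▸ lt_of_lt_of_le hx (by exact_mod_cast hkk)
      have : volume Ω = ⨆ k : ℕ, m k := by
        rw [hmdef]; conv_lhs => rw [hunion]
        exact hdir.measure_iUnion
      rw [this] at hAΩ
      obtain ⟨k, hk⟩ := lt_iSup_iff.1 hAΩ
      exact ⟨k, hk.le⟩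
    have hbdd : BddBelow T := ⟨0, fun t ht => (hT0 t ht).le⟩
    set t₀ : ℝ := sInf T with ht₀def
    have ht₀0 : 0 ≤ t₀ := le_csInf hTne fun t ht => (hT0 t ht).le
    set L : Set (EuclideanSpace ℝ (Fin n)) := Ω ∩ {x | u x ^ 2 < t₀} with hLdef
    set U : Set (EuclideanSpace ℝ (Fin n)) := Ω ∩ {x | u x ^ 2 ≤ t₀} with hUdef
    have hLm : MeasurableSet L := hms t₀
    have hUm : MeasurableSet U :=
      hΩm.inter (measurableSet_le (hum.pow_const 2) measurable_const)
    have hLU : L ⊆ U := Set.inter_subset_inter_right _ fun x hx => Set.mem_setOf_eq ▸ le_of_lt hx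
    have hLfin : volume L ≠ ⊤ := ((measure_mono Set.inter_subset_left).trans_lt
      hΩb.measure_lt_top).ne
    have hUfin : volume U ≠ ⊤ := ((measure_mono Set.inter_subset_left).trans_lt
      hΩb.measure_lt_top).ne
    -- volume L ≤ ofReal A
    have hL : volume L ≤ ENNReal.ofReal A := by
      have hunion : L = ⋃ k : ℕ, (Ω ∩ {x | u x ^ 2 < t₀ - 1/(k+1)}) := by
        ext x
        simp only [hLdef, Set.mem_iUnion, Set.mem_inter_iff, Set.mem_setOf_eq]
        constructor
        · rintro ⟨hx, hlt⟩
          obtain ⟨k, hk⟩ := exists_nat_one_div_lt (show (0:ℝ) < t₀ - u x ^ 2 by linarith)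
          exact ⟨k, hx, by linarith⟩
        · rintro ⟨k, hx, hlt⟩
          refine ⟨hx, lt_of_lt_of_le hlt ?_⟩
          have : (0:ℝ) < 1/((k:ℝ)+1) := by positivity
          linarith
      have hdir : Directed (· ⊆ ·) (fun k : ℕ => Ω ∩ {x | u x ^ 2 < t₀ - 1/(k+1)}) := by
        refine Monotone.directed_le fun k k' hkk => ?_
        refine Set.inter_subset_inter_right _ fun x hx => Set.mem_setOf_eq ▸ lt_of_lt_of_le hx ?_
        have h1 : (1:ℝ)/((k':ℝ)+1) ≤ 1/((k:ℝ)+1) := by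
          apply one_div_le_one_div_of_le (by positivity)
          have : (k:ℝ) ≤ (k':ℝ) := Nat.cast_le.2 hkk
          linarith
        linarith
      rw [hunion, hdir.measure_iUnion]
      refine iSup_le fun k => ?_
      have hnot : t₀ - 1/((k:ℝ)+1) ∉ T := by
        apply notMem_of_lt_csInf _ hbdd
        rw [← ht₀def]
        have : (0:ℝ) < 1/((k:ℝ)+1) := by positivity
        linarith
      rw [hTdef, Set.mem_setOf_eq, not_le] at hnot
      exact hnot.le
    -- ofReal A ≤ volume U
    have hU : ENNReal.ofReal A ≤ volume U := by
      have hinter : U = ⋂ k : ℕ, (Ω ∩ {x | u x ^ 2 < t₀ + 1/(k+1)}) := by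
        ext x
        simp only [hUdef, Set.mem_iInter, Set.mem_inter_iff, Set.mem_setOf_eq]
        constructor
        · rintro ⟨hx, hle⟩ k
          have : (0:ℝ) < 1/((k:ℝ)+1) := by positivity
          exact ⟨hx, by linarith⟩
        · intro hall
          refine ⟨(hall 0).1, ?_⟩
          by_contra hlt
          push_neg at hlt
          obtain ⟨k, hk⟩ := exists_nat_one_div_lt (show (0:ℝ) < u x ^ 2 - t₀ by linarith)
          have := (hall k).2
          linarith
      have hdir : Directed (· ⊇ ·) (fun k : ℕ => Ω ∩ {x | u x ^ 2 < t₀ + 1/(k+1)}) := by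
        refine Antitone.directed_ge fun k k' hkk => ?_
        refine Set.inter_subset_inter_right _ fun x hx => Set.mem_setOf_eq ▸ lt_of_lt_of_le hx ?_
        have h1 : (1:ℝ)/((k':ℝ)+1) ≤ 1/((k:ℝ)+1) := by
          apply one_div_le_one_div_of_le (by positivity)
          have : (k:ℝ) ≤ (k':ℝ) := Nat.cast_le.2 hkk
          linarith
        linarith
      rw [hinter, Directed.measure_iInter (fun k => (hms _).nullMeasurableSet) hdir
        ⟨0, ((measure_mono Set.inter_subset_left).trans_lt hΩb.measure_lt_top).ne⟩]
      refine le_iInf fun k => ?_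
      have : (0:ℝ) < 1/((k:ℝ)+1) := by positivity
      obtain ⟨t, htT, htlt⟩ := exists_lt_of_csInf_lt hTne
        (show sInf T < t₀ + 1/((k:ℝ)+1) by rw [← ht₀def]; linarith)
      exact le_trans htT (hmmono htlt.le)
    -- pick S ⊆ U \ L with volume S = ofReal A - volume L
    obtain ⟨S, hSsub, hSm, hSvol⟩ := Aux2.exists_subset_volume_eq hn (hUm.diff hLm)
      (hΩb.subset ((Set.diff_subset).trans Set.inter_subset_left))
      (a := ENNReal.ofReal A - volume L)
      (by
        rw [measure_diff hLU hLm.nullMeasurableSet hLfin]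
        exact tsub_le_tsub_right hU _)
    set D : Set (EuclideanSpace ℝ (Fin n)) := L ∪ S with hDdef
    have hDsub : D ⊆ Ω := Set.union_subset Set.inter_subset_left
      (hSsub.trans ((Set.diff_subset).trans Set.inter_subset_left))
    have hDm : MeasurableSet D := hLm.union hSm
    have hdisj : Disjoint L S :=
      Set.disjoint_of_subset_right hSsub Set.disjoint_sdiff_right
    have hDvol : volume D = ENNReal.ofReal A := by
      rw [hDdef, measure_union hdisj hSm, hSvol, add_tsub_cancel_of_le hL]
    have hDU : D ⊆ U := Set.union_subset hLU (hSsub.trans Set.diff_subset)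
    have hDtoReal : (volume D).toReal = A := by
      rw [hDvol, ENNReal.toReal_ofReal hA0]
    refine ⟨D, hDsub, hDm, hDvol, ?_⟩
    -- the bathtub inequality
    have hind_u2 : IntegrableOn (D.indicator (fun x => (u x) ^ 2)) Ω :=
      (hu2.indicator hDm).integrableOn
    have hind_1 : IntegrableOn (D.indicator (fun _ => (1:ℝ))) Ω := by
      refine Integrable.mono' (g := fun _ => (1:ℝ))
        (integrableOn_const hΩb.measure_lt_top.ne)
        ((measurable_const.indicator hDm).aestronglyMeasurable) ?_
      refine ae_of_all _ fun x => ?_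
      rw [Real.norm_eq_abs]
      by_cases hx : x ∈ D <;> simp [hx]
    have hpt : ∀ x ∈ Ω, D.indicator (fun x => (u x) ^ 2) x - f x * (u x) ^ 2 ≤
        (D.indicator (fun _ => (1:ℝ)) x - f x) * t₀ := by
      intro x hx
      by_cases hxD : x ∈ D
      · have h1 : u x ^ 2 ≤ t₀ := (hDU hxD).2
        have h2 : f x ≤ 1 := hf1 x hx
        simp only [Set.indicator_of_mem hxD]
        nlinarith
      · have h1 : t₀ ≤ u x ^ 2 := by
          by_contra hlt
          push_neg at hlt
          exact hxD (Or.inl ⟨hx, hlt⟩)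
        have h2 : 0 ≤ f x := hf0 x hx
        simp only [Set.indicator_of_notMem hxD]
        nlinarith
    have hint1 : (∫ x in Ω, D.indicator (fun x => (u x) ^ 2) x) = ∫ x in D, (u x) ^ 2 := by
      rw [setIntegral_indicator hDm, Set.inter_eq_self_of_subset_right hDsub]
    have hint2 : (∫ x in Ω, D.indicator (fun _ => (1:ℝ)) x) = A := by
      rw [setIntegral_indicator hDm, Set.inter_eq_self_of_subset_right hDsub,
        setIntegral_const, smul_eq_mul, mul_one, measureReal_def, hDtoReal]
    have hmain : (∫ x in Ω, (D.indicator (fun x => (u x) ^ 2) x - f x * (u x) ^ 2)) ≤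
        ∫ x in Ω, (D.indicator (fun _ => (1:ℝ)) x - f x) * t₀ := by
      refine setIntegral_mono_on (hind_u2.sub hfu2) ((hind_1.sub hfint).mul_const _) hΩm hpt
    rw [integral_sub hind_u2 hfu2, integral_mul_const, integral_sub hind_1 hfint,
      hint1, hint2] at hmain
    linarith [hmain]

end Aux3

namespace Aux4
variable {n : ℕ}

lemma sInf_of_subset_zero {T : Set ℝ} (hT : ∀ v ∈ T, v = 0) : sInf T = 0 := by
  rcases T.eq_empty_or_nonempty with hemp | hne
  · rw [hemp]; exact Real.sInf_empty
  · have : T = {0} := Set.eq_singleton_iff_nonempty_unique_mem.2 ⟨hne, hT⟩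
    rw [this, csInf_singleton]

lemma rho_mul_sq_integrableOn {Ω : Set (EuclideanSpace ℝ (Fin n))} (hΩm : MeasurableSet Ω)
    {ρ w : EuclideanSpace ℝ (Fin n) → ℝ} {C : ℝ}
    (hρm : Measurable ρ) (hwm : Measurable w) (hw2 : Integrable (fun x => (w x) ^ 2))
    (hbd : ∀ x ∈ Ω, |ρ x| ≤ C) :
    IntegrableOn (fun x => ρ x * (w x) ^ 2) Ω := by
  refine Integrable.mono' (g := fun x => C * (w x) ^ 2)
    (hw2.const_mul C).integrableOn (hρm.mul (hwm.pow_const 2)).aestronglyMeasurable ?_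
  refine (ae_restrict_iff' hΩm).2 (ae_of_all _ fun x hx => ?_)
  show ‖ρ x * (w x) ^ 2‖ ≤ C * (w x) ^ 2
  rw [Real.norm_eq_abs, abs_mul, abs_of_nonneg (sq_nonneg (w x))]
  exact mul_le_mul_of_nonneg_right (hbd x hx) (sq_nonneg _)

lemma sq_integral_pos {Ω : Set (EuclideanSpace ℝ (Fin n))} {s H : ℝ} (hΩm : MeasurableSet Ω)
    {ρ w : EuclideanSpace ℝ (Fin n) → ℝ}
    (hρm : Measurable ρ) (hw : memHs0 n s Ω w)
    (hρ0 : ∀ x ∈ Ω, 0 ≤ ρ x) (hρH : ∀ x ∈ Ω, ρ x ≤ H)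
    (hpos : 0 < ∫ x in Ω, ρ x * (w x) ^ 2) (hH : 0 < H) :
    0 < ∫ x, (w x) ^ 2 := by
  have h1 : IntegrableOn (fun x => ρ x * (w x) ^ 2) Ω :=
    rho_mul_sq_integrableOn hΩm hρm hw.1 hw.2.1 fun x hx => by
      rw [abs_of_nonneg (hρ0 x hx)]; exact hρH x hx
  have h2 : (∫ x in Ω, ρ x * (w x) ^ 2) ≤ ∫ x in Ω, H * (w x) ^ 2 := by
    refine setIntegral_mono_on h1 (hw.2.1.const_mul H).integrableOn hΩm fun x hx => ?_
    exact mul_le_mul_of_nonneg_right (hρH x hx) (sq_nonneg _)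
  rw [integral_const_mul] at h2
  have h3 : (∫ x in Ω, (w x) ^ 2) ≤ ∫ x, (w x) ^ 2 := by
    rw [Aux.setIntegral_sq hw]
  nlinarith [hpos.trans_le h2]

lemma exists_normalized {s : ℝ} {Ω : Set (EuclideanSpace ℝ (Fin n))}
    {w : EuclideanSpace ℝ (Fin n) → ℝ} (hw : memHs0 n s Ω w)
    (hb : 0 < ∫ x, (w x) ^ 2) :
    ∃ u, memHs0 n s Ω u ∧ (∫ x, (u x) ^ 2) = 1 ∧
      (∀ c, fracEnergy n s c u = (∫ x, (w x) ^ 2)⁻¹ * fracEnergy n s c w) ∧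
      (∀ (D : Set (EuclideanSpace ℝ (Fin n))) (g : EuclideanSpace ℝ (Fin n) → ℝ),
        (∫ x in D, g x * (u x) ^ 2) = (∫ x, (w x) ^ 2)⁻¹ * ∫ x in D, g x * (w x) ^ 2) ∧
      (∀ D : Set (EuclideanSpace ℝ (Fin n)),
        (∫ x in D, (u x) ^ 2) = (∫ x, (w x) ^ 2)⁻¹ * ∫ x in D, (w x) ^ 2) := by
  set b : ℝ := ∫ x, (w x) ^ 2 with hbdef
  set a : ℝ := (Real.sqrt b)⁻¹ with hadef
  have ha2 : a ^ 2 = b⁻¹ := by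
    rw [hadef, inv_pow, Real.sq_sqrt hb.le]
  refine ⟨fun x => a * w x, Aux.memHs0_smul a hw, ?_, ?_, ?_, ?_⟩
  · have : ∀ x, (a * w x) ^ 2 = a ^ 2 * (w x) ^ 2 := fun x => by ring
    simp only [this]
    rw [integral_const_mul, ha2, ← hbdef, inv_mul_cancel₀ hb.ne']
  · intro c
    rw [Aux.fracEnergy_smul s c a hw.2.2.1, ha2]
  · intro D g
    have : ∀ x, g x * (a * w x) ^ 2 = a ^ 2 * (g x * (w x) ^ 2) := fun x => by ring
    simp only [this]
    rw [integral_const_mul, ha2]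
  · intro D
    have : ∀ x, (a * w x) ^ 2 = a ^ 2 * (w x) ^ 2 := fun x => by ring
    simp only [this]
    rw [integral_const_mul, ha2]

end Aux4

set_option maxHeartbeats 2000000 in
/-- with `α = (H − h)·Θ(h,H,M)` and `A = (H|Ω| − M)/(H − h)`, one has
`Λ_Ω(α, A) = H·Θ(h,H,M)`. -/
theorem problem_relation {n : ℕ} (s c : ℝ) (hs0 : 0 < s) (hs1 : s < 1) (hc : 0 < c)
    (Ω : Set (EuclideanSpace ℝ (Fin n))) (hΩopen : IsOpen Ω) (hΩconn : IsConnected Ω)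
    (hΩbdd : Bornology.IsBounded Ω)
    (h H M : ℝ) (hh : 0 ≤ h) (hhH : h < H) (hM0 : 0 < M)
    (hM1 : h * (volume Ω).toReal ≤ M) (hM2 : M ≤ H * (volume Ω).toReal) :
    LamEV n s c ((H - h) * Theta n s c Ω h H M)
        ((H * (volume Ω).toReal - M) / (H - h)) Ω
      = H * Theta n s c Ω h H M := by
  have hΩm : MeasurableSet Ω := hΩopen.measurableSet
  have hΩfin : volume Ω ≠ ⊤ := hΩbdd.measure_lt_top.ne
  have hΩpos : 0 < (volume Ω).toReal :=
    ENNReal.toReal_pos (hΩopen.measure_pos volume hΩconn.nonempty).ne' hΩfin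
  set V : ℝ := (volume Ω).toReal with hVdef
  have hHpos : 0 < H := lt_of_le_of_lt hh hhH
  have hHh : 0 < H - h := sub_pos.2 hhH
  set SΘ : Set ℝ := { v | ∃ ρ w, Measurable ρ ∧ (∀ x ∈ Ω, ρ x ∈ Set.Icc h H) ∧
    (∫ x in Ω, ρ x) = M ∧ memHs0 n s Ω w ∧
    (0 < ∫ x in Ω, ρ x * (w x) ^ 2) ∧
    v = fracEnergy n s c w / ∫ x in Ω, ρ x * (w x) ^ 2 } with hSΘdef
  have hΘeq : Theta n s c Ω h H M = sInf SΘ := rfl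
  set Θ : ℝ := Theta n s c Ω h H M with hΘdef
  have hSΘnn : ∀ v ∈ SΘ, 0 ≤ v := by
    rintro v ⟨ρ, w, _, _, _, hw, hpos, rfl⟩
    exact div_nonneg (Aux.fracEnergy_nonneg s hc.le w) hpos.le
  have hΘnn : 0 ≤ Θ := by rw [hΘeq]; exact Real.sInf_nonneg hSΘnn
  have hSΘbdd : BddBelow SΘ := ⟨0, hSΘnn⟩
  set α : ℝ := (H - h) * Θ with hαdef
  have hαnn : 0 ≤ α := mul_nonneg hHh.le hΘnn
  set A : ℝ := (H * V - M) / (H - h) with hAdef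
  have hA0 : 0 ≤ A := div_nonneg (by nlinarith) hHh.le
  have hAHh : (H - h) * A = H * V - M := by
    rw [hAdef, mul_div_cancel₀ _ hHh.ne']
  set TL : Set ℝ := { v | ∃ D, D ⊆ Ω ∧ MeasurableSet D ∧ volume D = ENNReal.ofReal A ∧
    v = lamEV n s c α Ω D } with hTLdef
  have hLamEq : LamEV n s c α A Ω = sInf TL := rfl
  -- lamEV sets
  set SD : Set (EuclideanSpace ℝ (Fin n)) → Set ℝ := fun D =>
    { v | ∃ u, memHs0 n s Ω u ∧ (∫ x, (u x) ^ 2) = 1 ∧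
      v = fracEnergy n s c u + α * ∫ x in D, (u x) ^ 2 } with hSDdef
  have hlamEq : ∀ D, lamEV n s c α Ω D = sInf (SD D) := fun D => rfl
  have hSDnn : ∀ D, ∀ v ∈ SD D, 0 ≤ v := by
    rintro D v ⟨u, hu, hnorm, rfl⟩
    have h1 : 0 ≤ ∫ x in D, (u x) ^ 2 := integral_nonneg fun x => sq_nonneg _
    have h2 := Aux.fracEnergy_nonneg s hc.le u
    positivity
  have hSDbdd : ∀ D, BddBelow (SD D) := fun D => ⟨0, hSDnn D⟩
  have hTLnn : ∀ v ∈ TL, 0 ≤ v := by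
    rintro v ⟨D, _, _, _, rfl⟩
    rw [hlamEq]
    exact Real.sInf_nonneg (hSDnn D)
  have hgoal : LamEV n s c α A Ω = H * Θ := by
    by_cases hne : SΘ.Nonempty
    · -- SΘ nonempty
      -- there is a normalized eigen-candidate
      obtain ⟨v₀, hv₀⟩ := hne
      have hv₀' := hv₀
      rw [hSΘdef] at hv₀'
      obtain ⟨ρ₀, w₀, hρ₀m, hρ₀mem, hρ₀int, hw₀, hpos₀, hv₀eq⟩ := hv₀'
      have hb₀ : 0 < ∫ x, (w₀ x) ^ 2 :=
        Aux4.sq_integral_pos hΩm hρ₀m hw₀ (fun x hx => (hρ₀mem x hx).1.trans' hh)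
          (fun x hx => (hρ₀mem x hx).2) hpos₀ hHpos
      obtain ⟨u₀, hu₀, hnorm₀, -, -, -⟩ := Aux4.exists_normalized hw₀ hb₀
      -- every SD D is nonempty
      have hSDne : ∀ D : Set (EuclideanSpace ℝ (Fin n)), (SD D).Nonempty := fun D =>
        ⟨_, ⟨u₀, hu₀, hnorm₀, rfl⟩⟩
      rcases Nat.eq_zero_or_pos n with hn0 | hn
      · -- n = 0 : all energies vanish
        subst hn0
        have hE0 : ∀ u : EuclideanSpace ℝ (Fin 0) → ℝ, fracEnergy 0 s c u = 0 := by
          intro u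
          unfold fracEnergy
          rw [Aux.gag_zero]
          simp
        have hΘ0 : Θ = 0 := by
          rw [hΘeq]
          apply Aux4.sInf_of_subset_zero
          rintro v ⟨ρ, w, _, _, _, _, hpos, rfl⟩
          rw [hE0, zero_div]
        have hα0 : α = 0 := by rw [hαdef, hΘ0, mul_zero]
        rw [hLamEq, hΘ0, mul_zero]
        apply Aux4.sInf_of_subset_zero
        rintro v ⟨D, _, _, _, rfl⟩
        rw [hlamEq]
        apply Aux4.sInf_of_subset_zero
        rintro v' ⟨u, hu, hnorm, rfl⟩
        rw [hE0, hα0, zero_mul, zero_add]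
      · -- main case : n > 0
        -- (1) every element of TL is ≥ H * Θ
        have hgeElem : ∀ v ∈ TL, H * Θ ≤ v := by
          rintro v ⟨D, hDΩ, hDm, hDvol, rfl⟩
          rw [hlamEq]
          refine le_csInf (hSDne D) ?_
          rintro bb ⟨u, hu, hnorm, rfl⟩
          set τ : ℝ := ∫ x in D, (u x) ^ 2 with hτdef
          have hτ0 : 0 ≤ τ := integral_nonneg fun x => sq_nonneg _
          have hτ1 : τ ≤ 1 := by
            rw [hτdef, ← hnorm]
            exact setIntegral_le_integral hu.2.1 (ae_of_all _ fun x => sq_nonneg _)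
          have hΩint : (∫ x in Ω, (u x) ^ 2) = 1 := by rw [Aux.setIntegral_sq hu, hnorm]
          set ρ : EuclideanSpace ℝ (Fin n) → ℝ :=
            fun x => H - (H - h) * D.indicator (fun _ => (1:ℝ)) x with hρdef
          have hind_int : IntegrableOn (D.indicator (fun _ => (1:ℝ))) Ω := by
            refine Integrable.mono' (g := fun _ => (1:ℝ))
              (integrableOn_const hΩbdd.measure_lt_top.ne)
              ((measurable_const.indicator hDm).aestronglyMeasurable) ?_
            refine ae_of_all _ fun x => ?_
            show ‖D.indicator (fun _ => (1:ℝ)) x‖ ≤ 1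
            rw [Real.norm_eq_abs]
            by_cases hx : x ∈ D <;> simp [hx]
          have hindA : (∫ x in Ω, D.indicator (fun _ => (1:ℝ)) x) = A := by
            rw [setIntegral_indicator hDm, Set.inter_eq_self_of_subset_right hDΩ,
              setIntegral_const, smul_eq_mul, mul_one, measureReal_def, hDvol, ENNReal.toReal_ofReal hA0]
          have hI : (∫ x in Ω, ρ x * (u x) ^ 2) = H - (H - h) * τ := by
            have hpt : ∀ x, ρ x * (u x) ^ 2
                = H * (u x) ^ 2 - (H - h) * D.indicator (fun y => (u y) ^ 2) x := by
              intro x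
              simp only [hρdef]
              by_cases hx : x ∈ D
              · rw [Set.indicator_of_mem hx, Set.indicator_of_mem hx]; ring
              · rw [Set.indicator_of_notMem hx, Set.indicator_of_notMem hx]; ring
            simp only [hpt]
            rw [integral_sub ((hu.2.1.const_mul H).integrableOn)
                (((hu.2.1.indicator hDm).const_mul (H - h)).integrableOn),
              integral_const_mul, integral_const_mul, hΩint,
              setIntegral_indicator hDm, Set.inter_eq_self_of_subset_right hDΩ]
            rw [hτdef]
            ring
          rcases le_or_gt (∫ x in Ω, ρ x * (u x) ^ 2) 0 with hIle | hIpos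
          · have h1 : (H - h) * τ = H := by
              rw [hI] at hIle
              nlinarith
            have hEnn := Aux.fracEnergy_nonneg s hc.le u
            have hατ : α * τ = H * Θ := by
              rw [hαdef]
              calc (H - h) * Θ * τ = Θ * ((H - h) * τ) := by ring
                _ = Θ * H := by rw [h1]
                _ = H * Θ := by ring
            linarith
          · have hmem : (fracEnergy n s c u / ∫ x in Ω, ρ x * (u x) ^ 2) ∈ SΘ := by
              rw [hSΘdef]
              refine ⟨ρ, u, ?_, ?_, ?_, hu, hIpos, rfl⟩
              · exact measurable_const.sub
                  ((measurable_const.indicator hDm).const_mul (H - h))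
              · intro x hx
                rw [Set.mem_Icc]
                simp only [hρdef]
                by_cases hxD : x ∈ D
                · rw [Set.indicator_of_mem hxD]
                  constructor <;> [linarith; linarith]
                · rw [Set.indicator_of_notMem hxD]
                  constructor <;> linarith
              · simp only [hρdef]
                rw [integral_sub (integrableOn_const (C := H) hΩbdd.measure_lt_top.ne)
                    (hind_int.const_mul _),
                  setIntegral_const, smul_eq_mul, measureReal_def, integral_const_mul, hindA,
                  ← hVdef]
                linarith [hAHh]
            have hΘle : Θ ≤ fracEnergy n s c u / ∫ x in Ω, ρ x * (u x) ^ 2 := by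
              rw [hΘeq]; exact csInf_le hSΘbdd hmem
            rw [hI] at hΘle hIpos
            have hE : Θ * (H - (H - h) * τ) ≤ fracEnergy n s c u :=
              (le_div_iff₀ hIpos).1 hΘle
            have hrg : H * Θ - α * τ = Θ * (H - (H - h) * τ) := by rw [hαdef]; ring
            linarith
        -- common ingredients for the constructions
        have hρIcc_int : ∀ ρ : EuclideanSpace ℝ (Fin n) → ℝ, Measurable ρ →
            (∀ x ∈ Ω, ρ x ∈ Set.Icc h H) → IntegrableOn ρ Ω := by
          intro ρ hρm hρmem
          refine Integrable.mono' (g := fun _ => H)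
            (integrableOn_const hΩbdd.measure_lt_top.ne) hρm.aestronglyMeasurable ?_
          refine (ae_restrict_iff' hΩm).2 (ae_of_all _ fun x hx => ?_)
          show ‖ρ x‖ ≤ H
          rw [Real.norm_eq_abs, abs_of_nonneg ((hρmem x hx).1.trans' hh)]
          exact (hρmem x hx).2
        have hfA : ∀ ρ : EuclideanSpace ℝ (Fin n) → ℝ, Measurable ρ →
            (∀ x ∈ Ω, ρ x ∈ Set.Icc h H) → (∫ x in Ω, ρ x) = M →
            (∫ x in Ω, (H - ρ x) / (H - h)) = A := by
          intro ρ hρm hρmem hρint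
          rw [integral_div, integral_sub (integrableOn_const (C := H) hΩbdd.measure_lt_top.ne)
              (hρIcc_int ρ hρm hρmem),
            setIntegral_const, smul_eq_mul, measureReal_def, hρint, ← hVdef, hAdef]
          ring_nf
        -- (2) TL is nonempty
        have hTLne : TL.Nonempty := by
          obtain ⟨D, hDΩ, hDm, hDvol, -⟩ := Aux3.bathtub hn hΩm hΩbdd hu₀.1 hu₀.2.1
            (f := fun x => (H - ρ₀ x) / (H - h))
            ((measurable_const.sub hρ₀m).div_const _)
            (fun x hx => div_nonneg (by linarith [(hρ₀mem x hx).2]) hHh.le)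
            (fun x hx => by
              rw [div_le_one hHh]
              linarith [(hρ₀mem x hx).1])
          rw [hfA ρ₀ hρ₀m hρ₀mem hρ₀int] at hDvol
          exact ⟨_, D, hDΩ, hDm, hDvol, rfl⟩
        -- (3) upper bound via near-optimal pairs
        have hwitness : ∀ ε : ℝ, 0 < ε → LamEV n s c α A Ω ≤ H * Θ + ε := by
          intro ε hε
          set ε' : ℝ := ε / (H + 1) with hε'def
          have hε' : 0 < ε' := div_pos hε (by linarith)
          have hlt : sInf SΘ < Θ + ε' := by rw [← hΘeq]; linarith
          obtain ⟨vv, hvvmem, hvvlt⟩ := exists_lt_of_csInf_lt ⟨v₀, hv₀⟩ hlt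
          rw [hSΘdef] at hvvmem
          obtain ⟨ρ, w, hρm, hρmem, hρint, hw, hpos, rfl⟩ := hvvmem
          set J : ℝ := ∫ x in Ω, ρ x * (w x) ^ 2 with hJdef
          have hb : 0 < ∫ x, (w x) ^ 2 :=
            Aux4.sq_integral_pos hΩm hρm hw (fun x hx => (hρmem x hx).1.trans' hh)
              (fun x hx => (hρmem x hx).2) hpos hHpos
          set b : ℝ := ∫ x, (w x) ^ 2 with hbdef
          obtain ⟨u, hu, hnorm, hEeq, hgeq, hpeq⟩ := Aux4.exists_normalized hw hb
          obtain ⟨D, hDΩ, hDm, hDvol, hDle⟩ := Aux3.bathtub hn hΩm hΩbdd hu.1 hu.2.1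
            (f := fun x => (H - ρ x) / (H - h))
            ((measurable_const.sub hρm).div_const _)
            (fun x hx => div_nonneg (by linarith [(hρmem x hx).2]) hHh.le)
            (fun x hx => by
              rw [div_le_one hHh]
              linarith [(hρmem x hx).1])
          rw [hfA ρ hρm hρmem hρint] at hDvol
          have hmemTL : lamEV n s c α Ω D ∈ TL := ⟨D, hDΩ, hDm, hDvol, rfl⟩
          have hlam_le : lamEV n s c α Ω D
              ≤ fracEnergy n s c u + α * ∫ x in D, (u x) ^ 2 := by
            rw [hlamEq]
            exact csInf_le (hSDbdd D) ⟨u, hu, hnorm, rfl⟩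
          have hρw2int : IntegrableOn (fun x => ρ x * (w x) ^ 2) Ω :=
            Aux4.rho_mul_sq_integrableOn hΩm hρm hw.1 hw.2.1 fun x hx => by
              rw [abs_of_nonneg ((hρmem x hx).1.trans' hh)]; exact (hρmem x hx).2
          have hΩw : (∫ x in Ω, (w x) ^ 2) = b := by rw [Aux.setIntegral_sq hw]
          have hfw : (∫ x in Ω, ((H - ρ x) / (H - h)) * (w x) ^ 2)
              = (H * b - J) / (H - h) := by
            have hpt : ∀ x, ((H - ρ x) / (H - h)) * (w x) ^ 2
                = (H * (w x) ^ 2 - ρ x * (w x) ^ 2) / (H - h) := by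
              intro x; field_simp
            simp only [hpt]
            rw [integral_div, integral_sub ((hw.2.1.const_mul H).integrableOn) hρw2int,
              integral_const_mul, hΩw, ← hJdef]
          have hJle : J ≤ H * b := by
            have := setIntegral_mono_on (μ := volume) hρw2int
              ((hw.2.1.const_mul H).integrableOn) hΩm
              (fun x hx => mul_le_mul_of_nonneg_right ((hρmem x hx).2) (sq_nonneg _))
            rw [integral_const_mul, hΩw] at this
            exact this
          have hEw : fracEnergy n s c w ≤ (Θ + ε') * J :=
            le_of_lt ((div_lt_iff₀ hpos).1 hvvlt)
          have hDu : (∫ x in D, (u x) ^ 2) ≤ b⁻¹ * ((H * b - J) / (H - h)) := by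
            refine le_trans hDle ?_
            rw [hgeq Ω (fun x => (H - ρ x) / (H - h)), hfw]
          have hEu : fracEnergy n s c u = b⁻¹ * fracEnergy n s c w := hEeq c
          have hbinv : 0 < b⁻¹ := inv_pos.2 hb
          have step1 : fracEnergy n s c u + α * ∫ x in D, (u x) ^ 2
              ≤ b⁻¹ * ((Θ + ε') * J) + α * (b⁻¹ * ((H * b - J) / (H - h))) := by
            have e1 : fracEnergy n s c u ≤ b⁻¹ * ((Θ + ε') * J) := by
              rw [hEu]; exact mul_le_mul_of_nonneg_left hEw hbinv.le
            have e2 : α * (∫ x in D, (u x) ^ 2) ≤ α * (b⁻¹ * ((H * b - J) / (H - h))) :=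
              mul_le_mul_of_nonneg_left hDu hαnn
            linarith
          have step2 : b⁻¹ * ((Θ + ε') * J) + α * (b⁻¹ * ((H * b - J) / (H - h)))
              = H * Θ + ε' * (J * b⁻¹) := by
            rw [hαdef]
            field_simp
            ring
          have step3 : ε' * (J * b⁻¹) ≤ ε' * H := by
            refine mul_le_mul_of_nonneg_left ?_ hε'.le
            rw [← div_eq_mul_inv]
            exact (div_le_iff₀ hb).2 hJle
          have step4 : ε' * H < ε := by
            rw [hε'def, div_mul_eq_mul_div, div_lt_iff₀ (by linarith : (0:ℝ) < H + 1)]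
            nlinarith
          calc LamEV n s c α A Ω ≤ lamEV n s c α Ω D := by
                rw [hLamEq]; exact csInf_le ⟨0, hTLnn⟩ hmemTL
            _ ≤ fracEnergy n s c u + α * ∫ x in D, (u x) ^ 2 := hlam_le
            _ ≤ b⁻¹ * ((Θ + ε') * J) + α * (b⁻¹ * ((H * b - J) / (H - h))) := step1
            _ = H * Θ + ε' * (J * b⁻¹) := step2
            _ ≤ H * Θ + ε' * H := by linarith
            _ ≤ H * Θ + ε := by linarith
        refine le_antisymm (le_of_forall_pos_le_add hwitness) ?_
        rw [hLamEq]
        exact le_csInf hTLne hgeElem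
    · -- SΘ empty : everything vanishes
      rw [Set.not_nonempty_iff_eq_empty] at hne
      have hΘ0 : Θ = 0 := by rw [hΘeq, hne, Real.sInf_empty]
      have hSD_empty : ∀ D : Set (EuclideanSpace ℝ (Fin n)), SD D = ∅ := by
        intro D
        rw [Set.eq_empty_iff_forall_notMem]
        rintro v ⟨u, hu, hnorm, -⟩
        -- construct an element of SΘ : contradiction
        have hmem : (fracEnergy n s c u / ∫ x in Ω, (fun _ => M / V) x * (u x) ^ 2) ∈ SΘ := by
          rw [hSΘdef]
          refine ⟨fun _ => M / V, u, measurable_const, ?_, ?_, hu, ?_, rfl⟩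
          · intro x hx
            constructor
            · rw [le_div_iff₀ hΩpos]; linarith
            · rw [div_le_iff₀ hΩpos]; linarith
          · rw [setIntegral_const, smul_eq_mul, measureReal_def, ← hVdef]
            field_simp
          · have : (∫ x in Ω, (fun _ => M / V) x * (u x) ^ 2) = M / V := by
              simp only
              rw [integral_const_mul, Aux.setIntegral_sq hu, hnorm, mul_one]
            rw [this]
            positivity
        rw [hne] at hmem
        exact hmem
      rw [hLamEq, hΘ0, mul_zero]
      apply Aux4.sInf_of_subset_zero
      rintro v ⟨D, _, _, _, rfl⟩
      rw [hlamEq, hSD_empty, Real.sInf_empty]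
  exact hgoal


end
end

section
/- Let 0 < s < 1, let N be a positive integer, let b > 0, and let h : [b,b+1] → ℝ be continuous and nonnegative. Define, for r ≥ 0 and y > 0, H(r,y) := C_{2,s}·y^{2s} ∫_b^{b+1} ∫_0^{2π} t·h(t)·cos(Nθ)/(r² + t² + y² − 2rt·cosθ)^{1+s} dθ dt, and let H̃(r,y) be given by the same formula with cos(Nθ) replaced by 1. Then 0 ≤ H(r,y) ≤ H̃(r,y) for all r ≥ 0 and y > 0. -/
section helpers
open MeasureTheory Real intervalIntegral Nat

-- step 0: integral of cos(nθ) over a period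
lemma integral_cos_int_mul (n : ℤ) (hn : n ≠ 0) :
    ∫ θ in (0:ℝ)..(2*π), Real.cos (n * θ) = 0 := by
  have hc : (n:ℝ) ≠ 0 := Int.cast_ne_zero.mpr hn
  rw [intervalIntegral.integral_comp_mul_left (fun x => Real.cos x) hc]
  rw [integral_cos]
  have h1 : (n:ℝ) * (2*π) = ((2*n : ℤ):ℝ) * π := by push_cast; ring
  have h2 : (n:ℝ) * 0 = 0 := by ring
  rw [h1, h2, Real.sin_int_mul_pi, Real.sin_zero]
  simp

lemma contI (n : ℤ) (m : ℕ) : Continuous fun θ : ℝ => Real.cos (n*θ) * Real.cos θ ^ m := by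
  fun_prop

lemma I_nonneg (m : ℕ) : ∀ (n : ℤ),
    0 ≤ ∫ θ in (0:ℝ)..(2*π), Real.cos (n*θ) * Real.cos θ ^ m := by
  induction m with
  | zero =>
    intro n
    rcases eq_or_ne n 0 with rfl | hn
    · simp [Real.pi_pos.le]
    · simp only [pow_zero, mul_one]
      rw [integral_cos_int_mul n hn]
  | succ m ih =>
    intro n
    have key : ∀ θ : ℝ, Real.cos (n*θ) * Real.cos θ ^ (m+1) =
        (Real.cos (((n+1:ℤ):ℝ)*θ) * Real.cos θ ^ m + Real.cos (((n-1:ℤ):ℝ)*θ) * Real.cos θ ^ m) / 2 := by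
      intro θ
      have e1 : ((n+1 : ℤ):ℝ) * θ = (n:ℝ)*θ + θ := by push_cast; ring
      have e2 : ((n-1 : ℤ):ℝ) * θ = (n:ℝ)*θ - θ := by push_cast; ring
      rw [e1, e2, Real.cos_add, Real.cos_sub, pow_succ]
      ring
    rw [intervalIntegral.integral_congr (g := fun θ =>
        (Real.cos (((n+1:ℤ):ℝ)*θ) * Real.cos θ ^ m + Real.cos (((n-1:ℤ):ℝ)*θ) * Real.cos θ ^ m) / 2)
        (fun θ _ => key θ)]
    rw [intervalIntegral.integral_div]
    rw [intervalIntegral.integral_add ((contI (n+1) m).intervalIntegrable _ _)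
        ((contI (n-1) m).intervalIntegrable _ _)]
    have := ih (n+1)
    have := ih (n-1)
    positivity

lemma J_nonneg (n : ℤ) (z : ℝ) (hz : 0 ≤ z) :
    0 ≤ ∫ θ in (0:ℝ)..(2*π), Real.cos (n*θ) * Real.exp (z * Real.cos θ) := by
  have hle : (0:ℝ) ≤ 2*π := by positivity
  rw [intervalIntegral.integral_of_le hle]
  set F : ℕ → ℝ → ℝ := fun m θ => Real.cos (n*θ) * ((z*Real.cos θ)^m / m !) with hF
  have hFcont : ∀ m, Continuous (F m) := by intro m; fun_prop
  have hFint : ∀ m, Integrable (F m) (volume.restrict (Set.Ioc 0 (2*π))) := fun m =>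
    ((hFcont m).integrableOn_Ioc)
  have hexp : ∀ θ : ℝ, Real.cos (n*θ) * Real.exp (z * Real.cos θ) = ∑' m, F m θ := by
    intro θ
    rw [Real.exp_eq_exp_ℝ, NormedSpace.exp_eq_tsum_div]
    exact (tsum_mul_left).symm
  have hnorm : ∀ m, (∫ θ in Set.Ioc 0 (2*π), ‖F m θ‖) ≤ (2*π) * (z^m / m !) := by
    intro m
    have hb : ∀ θ ∈ Set.Ioc (0:ℝ) (2*π), ‖F m θ‖ ≤ z^m / m ! := by
      intro θ _
      have h1 : ‖F m θ‖ = |Real.cos (n*θ)| * (|z*Real.cos θ|^m / m !) := by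
        simp [hF, abs_mul, abs_div, abs_pow]
      rw [h1]
      have h2 : |z*Real.cos θ| ≤ z := by
        rw [abs_mul, abs_of_nonneg hz]
        nlinarith [Real.abs_cos_le_one θ, abs_nonneg (Real.cos θ)]
      have h3 : |z*Real.cos θ|^m ≤ z^m := pow_le_pow_left₀ (abs_nonneg _) h2 m
      have h4 : |Real.cos (n*θ)| ≤ 1 := Real.abs_cos_le_one _
      have h5 : (0:ℝ) < m ! := by positivity
      calc |Real.cos (n*θ)| * (|z*Real.cos θ|^m / m !)
          ≤ 1 * (z^m / m !) := by
            apply mul_le_mul h4 ?_ (by positivity) zero_le_one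
            gcongr
        _ = z^m / m ! := one_mul _
    calc (∫ θ in Set.Ioc 0 (2*π), ‖F m θ‖)
        ≤ ∫ _ in Set.Ioc (0:ℝ) (2*π), z^m / m ! := by
          apply setIntegral_mono_on (hFint m).norm ((integrableOn_const_iff (by finiteness)).mpr ?_) measurableSet_Ioc hb
          right; rw [Real.volume_Ioc]; exact ENNReal.ofReal_lt_top
      _ = (2*π) * (z^m / m !) := by
          rw [setIntegral_const, Real.volume_real_Ioc_of_le hle, smul_eq_mul, sub_zero]
  have hsum : Summable fun m => ∫ θ in Set.Ioc 0 (2*π), ‖F m θ‖ :=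
    Summable.of_nonneg_of_le (fun m => integral_nonneg fun θ => norm_nonneg _) hnorm
      ((Real.summable_pow_div_factorial z).mul_left (2*π))
  have hswap := MeasureTheory.integral_tsum_of_summable_integral_norm hFint hsum
  have hcongr : (∫ θ in Set.Ioc 0 (2*π), Real.cos (n*θ) * Real.exp (z * Real.cos θ))
      = ∫ θ in Set.Ioc 0 (2*π), ∑' m, F m θ := by
    exact integral_congr_ae (Filter.Eventually.of_forall fun θ => hexp θ)
  rw [hcongr, ← hswap]
  apply tsum_nonneg
  intro m
  have hFm : ∀ θ : ℝ, F m θ = (z^m / m !) * (Real.cos (n*θ) * Real.cos θ ^ m) := by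
    intro θ; simp only [hF, mul_pow]; ring
  calc (0:ℝ) ≤ (z^m / m !) * ∫ θ in Set.Ioc 0 (2*π), Real.cos (n*θ) * Real.cos θ ^ m := by
        have := I_nonneg m n
        rw [intervalIntegral.integral_of_le hle] at this
        positivity
    _ = ∫ θ in Set.Ioc 0 (2*π), F m θ := by
        rw [← MeasureTheory.integral_const_mul]
        exact integral_congr_ae (Filter.Eventually.of_forall fun θ => (hFm θ).symm)

lemma gamma_rep (p c : ℝ) (hp : 0 < p) (hc : 0 < c) :
    c ^ (-p) = (Real.Gamma p)⁻¹ * ∫ u in Set.Ioi (0:ℝ), u^(p-1) * Real.exp (-(c*u)) := by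
  have hg := (Real.Gamma_pos_of_pos hp).ne'
  rw [Real.integral_rpow_mul_exp_neg_mul_Ioi hp hc, one_div, Real.inv_rpow hc.le,
    ← Real.rpow_neg hc.le]
  field_simp

lemma gamma_intg (p c : ℝ) (hp : 0 < p) (hc : 0 < c) :
    IntegrableOn (fun u : ℝ => u^(p-1) * Real.exp (-(c*u))) (Set.Ioi 0) := by
  have h := integrableOn_rpow_mul_exp_neg_mul_rpow (p := 1) (s := p-1) (b := c)
    (by linarith) one_pos hc
  apply h.congr_fun ?_ measurableSet_Ioi
  intro x hx
  simp only [Real.rpow_one, neg_mul]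

lemma core_nonneg (n : ℤ) (p A B : ℝ) (hp : 0 < p) (hB : 0 ≤ B) (hBA : B < A) :
    0 ≤ ∫ θ in (0:ℝ)..(2*π), Real.cos (n*θ) / (A - B*Real.cos θ) ^ p := by
  have hle : (0:ℝ) ≤ 2*π := by positivity
  have hcpos : ∀ θ : ℝ, 0 < A - B*Real.cos θ := by
    intro θ; nlinarith [Real.cos_le_one θ, Real.neg_one_le_cos θ]
  have hAB : 0 < A - B := by linarith
  set f : ℝ → ℝ → ℝ :=
    fun θ u => Real.cos (n*θ) * (u^(p-1) * Real.exp (-((A - B*Real.cos θ)*u))) with hf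
  have hrep : ∀ θ : ℝ, Real.cos (n*θ) / (A - B*Real.cos θ) ^ p
      = (Real.Gamma p)⁻¹ * ∫ u in Set.Ioi (0:ℝ), f θ u := by
    intro θ
    rw [div_eq_mul_inv, ← Real.rpow_neg (hcpos θ).le, gamma_rep p _ hp (hcpos θ), hf]
    simp only
    rw [MeasureTheory.integral_const_mul]
    ring
  rw [intervalIntegral.integral_of_le hle,
    integral_congr_ae (Filter.Eventually.of_forall hrep), MeasureTheory.integral_const_mul]
  set μ := volume.restrict (Set.Ioc (0:ℝ) (2*π)) with hμ
  set ν := volume.restrict (Set.Ioi (0:ℝ)) with hν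
  have hS : MeasurableSet (Set.Ioc (0:ℝ) (2*π) ×ˢ Set.Ioi (0:ℝ)) :=
    measurableSet_Ioc.prod measurableSet_Ioi
  have hconton : ContinuousOn (Function.uncurry f) (Set.Ioc (0:ℝ) (2*π) ×ˢ Set.Ioi (0:ℝ)) := by
    apply ContinuousOn.mul
    · apply Continuous.continuousOn
      exact Real.continuous_cos.comp (continuous_const.mul continuous_fst)
    · apply ContinuousOn.mul
      · apply ContinuousOn.rpow_const (continuous_snd.continuousOn)
        intro q hq
        exact Or.inl (ne_of_gt hq.2)
      · apply Continuous.continuousOn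
        apply Real.continuous_exp.comp
        apply Continuous.neg
        exact ((continuous_const.sub (continuous_const.mul
          (Real.continuous_cos.comp continuous_fst))).mul continuous_snd)
  have hprodμ : μ.prod ν = (volume.prod volume).restrict
      (Set.Ioc (0:ℝ) (2*π) ×ˢ Set.Ioi (0:ℝ)) := by
    rw [hμ, hν, Measure.prod_restrict]
  have hmeas : AEStronglyMeasurable (Function.uncurry f) (μ.prod ν) := by
    rw [hprodμ]
    exact hconton.aestronglyMeasurable hS
  have hgint : Integrable (fun q : ℝ × ℝ =>
      (1:ℝ) * (q.2^(p-1) * Real.exp (-((A-B)*q.2)))) (μ.prod ν) := by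
    have h1 : Integrable (fun _ : ℝ => (1:ℝ)) μ := by
      rw [hμ]
      apply (integrableOn_const_iff (by finiteness)).mpr
      right; rw [Real.volume_Ioc]; exact ENNReal.ofReal_lt_top
    have h2 : Integrable (fun u : ℝ => u^(p-1) * Real.exp (-((A-B)*u))) ν :=
      gamma_intg p (A-B) hp hAB
    exact Integrable.mul_prod h1 h2
  have hintg : Integrable (Function.uncurry f) (μ.prod ν) := by
    apply hgint.mono' hmeas
    rw [hprodμ]
    filter_upwards [MeasureTheory.ae_restrict_mem hS] with q hq
    have hu : 0 < q.2 := hq.2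
    have h1 : ‖Function.uncurry f q‖
        = |Real.cos (n*q.1)| * (|q.2^(p-1)| * Real.exp (-((A - B*Real.cos q.1)*q.2))) := by
      simp [Function.uncurry, hf, abs_mul, abs_of_pos (Real.exp_pos _)]
    rw [h1, one_mul, abs_of_nonneg (Real.rpow_nonneg hu.le _)]
    have h2 : Real.exp (-((A - B*Real.cos q.1)*q.2)) ≤ Real.exp (-((A-B)*q.2)) := by
      apply Real.exp_le_exp.mpr
      apply neg_le_neg
      apply mul_le_mul_of_nonneg_right ?_ hu.le
      nlinarith [Real.cos_le_one q.1]
    calc |Real.cos (n*q.1)| * (q.2^(p-1) * Real.exp (-((A - B*Real.cos q.1)*q.2)))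
        ≤ 1 * (q.2^(p-1) * Real.exp (-((A-B)*q.2))) := by
          apply mul_le_mul (Real.abs_cos_le_one _) ?_ (by positivity) zero_le_one
          exact mul_le_mul_of_nonneg_left h2 (Real.rpow_nonneg hu.le _)
      _ = q.2^(p-1) * Real.exp (-((A-B)*q.2)) := one_mul _
  rw [MeasureTheory.integral_integral_swap hintg]
  apply mul_nonneg (inv_nonneg.mpr (Real.Gamma_pos_of_pos hp).le)
  apply setIntegral_nonneg measurableSet_Ioi
  intro u hu
  have hu0 : (0:ℝ) < u := hu
  have hsplit : ∀ θ : ℝ, f θ u = (u^(p-1) * Real.exp (-(A*u))) *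
      (Real.cos (n*θ) * Real.exp ((B*u) * Real.cos θ)) := by
    intro θ
    rw [hf]
    simp only
    have he : -((A - B*Real.cos θ)*u) = -(A*u) + (B*u)*Real.cos θ := by ring
    rw [he, Real.exp_add]
    ring
  simp only [hsplit]
  rw [MeasureTheory.integral_const_mul]
  apply mul_nonneg (by positivity)
  have := J_nonneg n (B*u) (mul_nonneg hB hu0.le)
  rwa [intervalIntegral.integral_of_le hle] at this

lemma core_le (n : ℤ) (p A B : ℝ) (hp : 0 < p) (hB : 0 ≤ B) (hBA : B < A) :
    (∫ θ in (0:ℝ)..(2*π), Real.cos (n*θ) / (A - B*Real.cos θ) ^ p)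
      ≤ ∫ θ in (0:ℝ)..(2*π), 1 / (A - B*Real.cos θ) ^ p := by
  have hle : (0:ℝ) ≤ 2*π := by positivity
  have hcpos : ∀ θ : ℝ, 0 < A - B*Real.cos θ := by
    intro θ; nlinarith [Real.cos_le_one θ, Real.neg_one_le_cos θ]
  have hdc : Continuous fun θ : ℝ => (A - B*Real.cos θ) ^ p := by
    apply Continuous.rpow_const
    · exact continuous_const.sub (continuous_const.mul Real.continuous_cos)
    · intro θ; exact Or.inl (hcpos θ).ne'
  have hne : ∀ θ : ℝ, (A - B*Real.cos θ) ^ p ≠ 0 :=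
    fun θ => (Real.rpow_pos_of_pos (hcpos θ) p).ne'
  apply intervalIntegral.integral_mono_on hle
  · exact ((Real.continuous_cos.comp (continuous_const.mul continuous_id)).div hdc
      hne).intervalIntegrable _ _
  · exact (continuous_const.div hdc hne).intervalIntegrable _ _
  · intro θ _
    gcongr
    · exact (Real.rpow_pos_of_pos (hcpos θ) p).le
    · exact Real.cos_le_one _

end helpers


open MeasureTheory Real
open scoped ENNReal

/-- the angular-mode extension `H(r,y)` (with factor `cos(Nθ)`) of a
nonnegative continuous profile `h` satisfies `0 ≤ H ≤ H̃`, where `H̃` is the radial extension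
(the same formula with `cos(Nθ)` replaced by `1`). -/
theorem extension_comparison (s : ℝ) (hs0 : 0 < s) (hs1 : s < 1)
    (N : ℕ) (hN : 0 < N) (b : ℝ) (hb : 0 < b)
    (C : ℝ) (hC : 0 < C)
    (h : ℝ → ℝ) (hhcont : ContinuousOn h (Set.Icc b (b + 1)))
    (hhnonneg : ∀ t ∈ Set.Icc b (b + 1), 0 ≤ h t)
    (H Htil : ℝ → ℝ → ℝ)
    (hH : ∀ r y : ℝ, H r y = C * y ^ (2 * s) *
      ∫ t in b..(b + 1), ∫ θ in (0 : ℝ)..(2 * π),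
        t * h t * Real.cos (N * θ) /
          (r ^ 2 + t ^ 2 + y ^ 2 - 2 * r * t * Real.cos θ) ^ (1 + s))
    (hHtil : ∀ r y : ℝ, Htil r y = C * y ^ (2 * s) *
      ∫ t in b..(b + 1), ∫ θ in (0 : ℝ)..(2 * π),
        t * h t / (r ^ 2 + t ^ 2 + y ^ 2 - 2 * r * t * Real.cos θ) ^ (1 + s)) :
    ∀ r y : ℝ, 0 ≤ r → 0 < y → 0 ≤ H r y ∧ H r y ≤ Htil r y := by
  intro r y hr hy
  have hp : (0:ℝ) < 1 + s := by linarith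
  have hlt : b ≤ b + 1 := by linarith
  have hApos : ∀ t θ : ℝ, 0 < r ^ 2 + t ^ 2 + y ^ 2 - 2 * r * t * Real.cos θ := by
    intro t θ
    nlinarith [mul_nonneg (sq_nonneg (r - t))
        (by nlinarith [Real.neg_one_le_cos θ] : (0:ℝ) ≤ 1 + Real.cos θ),
      mul_nonneg (sq_nonneg (r + t))
        (by nlinarith [Real.cos_le_one θ] : (0:ℝ) ≤ 1 - Real.cos θ),
      pow_pos hy 2]
  set Kcos : ℝ → ℝ := fun t => ∫ θ in (0:ℝ)..(2*π),
    Real.cos (((N:ℤ):ℝ) * θ) / (r ^ 2 + t ^ 2 + y ^ 2 - 2 * r * t * Real.cos θ) ^ (1 + s)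
    with hKcos
  set Krad : ℝ → ℝ := fun t => ∫ θ in (0:ℝ)..(2*π),
    1 / (r ^ 2 + t ^ 2 + y ^ 2 - 2 * r * t * Real.cos θ) ^ (1 + s) with hKrad
  have key : ∀ t : ℝ, (∫ θ in (0:ℝ)..(2*π), t * h t * Real.cos (N * θ) /
      (r ^ 2 + t ^ 2 + y ^ 2 - 2 * r * t * Real.cos θ) ^ (1 + s))
      = (t * h t) * Kcos t := by
    intro t
    rw [hKcos]
    simp only
    rw [← intervalIntegral.integral_const_mul]
    apply intervalIntegral.integral_congr
    intro θ _
    push_cast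
    ring
  have keyrad : ∀ t : ℝ, (∫ θ in (0:ℝ)..(2*π), t * h t /
      (r ^ 2 + t ^ 2 + y ^ 2 - 2 * r * t * Real.cos θ) ^ (1 + s))
      = (t * h t) * Krad t := by
    intro t
    rw [hKrad]
    simp only
    rw [← intervalIntegral.integral_const_mul]
    apply intervalIntegral.integral_congr
    intro θ _
    ring
  -- core bounds on Icc
  have hB : ∀ t ∈ Set.Icc b (b+1), (0:ℝ) ≤ 2*r*t := by
    intro t ht
    have := hb.trans_le ht.1
    positivity
  have hBA : ∀ t ∈ Set.Icc b (b+1), 2*r*t < r^2 + t^2 + y^2 := by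
    intro t ht
    nlinarith [sq_nonneg (r - t), pow_pos hy 2]
  have hKcos_form : ∀ t : ℝ, Kcos t = ∫ θ in (0:ℝ)..(2*π),
      Real.cos (((N:ℤ):ℝ) * θ) / ((r^2 + t^2 + y^2) - (2*r*t) * Real.cos θ) ^ (1 + s) := by
    intro t; rw [hKcos]
  have hKcos_nonneg : ∀ t ∈ Set.Icc b (b+1), 0 ≤ Kcos t := by
    intro t ht
    rw [hKcos_form t]
    exact core_nonneg (N:ℤ) (1+s) _ _ hp (hB t ht) (hBA t ht)
  have hKle : ∀ t ∈ Set.Icc b (b+1), Kcos t ≤ Krad t := by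
    intro t ht
    rw [hKcos_form t]
    exact core_le (N:ℤ) (1+s) _ _ hp (hB t ht) (hBA t ht)
  -- continuity of the kernels in t
  have hDcont : Continuous fun q : ℝ × ℝ =>
      (r ^ 2 + q.1 ^ 2 + y ^ 2 - 2 * r * q.1 * Real.cos q.2) ^ (1 + s) := by
    apply Continuous.rpow_const
    · fun_prop
    · intro q
      exact Or.inl (hApos q.1 q.2).ne'
  have hDne : ∀ q : ℝ × ℝ,
      (r ^ 2 + q.1 ^ 2 + y ^ 2 - 2 * r * q.1 * Real.cos q.2) ^ (1 + s) ≠ 0 :=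
    fun q => (Real.rpow_pos_of_pos (hApos q.1 q.2) _).ne'
  have hKcos_cont : Continuous Kcos := by
    rw [hKcos]
    apply intervalIntegral.continuous_parametric_intervalIntegral_of_continuous'
      (f := fun t θ => Real.cos (((N:ℤ):ℝ) * θ) /
        (r ^ 2 + t ^ 2 + y ^ 2 - 2 * r * t * Real.cos θ) ^ (1 + s))
    apply Continuous.div
    · fun_prop
    · exact hDcont
    · exact hDne
  have hKrad_cont : Continuous Krad := by
    rw [hKrad]
    apply intervalIntegral.continuous_parametric_intervalIntegral_of_continuous'
      (f := fun t θ => 1 /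
        (r ^ 2 + t ^ 2 + y ^ 2 - 2 * r * t * Real.cos θ) ^ (1 + s))
    apply Continuous.div
    · fun_prop
    · exact hDcont
    · exact hDne
  have hth : ContinuousOn (fun t : ℝ => t * h t) (Set.Icc b (b+1)) :=
    (continuousOn_id.mul hhcont)
  have hint1 : IntervalIntegrable (fun t => (t * h t) * Kcos t) volume b (b+1) := by
    apply ContinuousOn.intervalIntegrable
    rw [Set.uIcc_of_le hlt]
    exact hth.mul hKcos_cont.continuousOn
  have hint2 : IntervalIntegrable (fun t => (t * h t) * Krad t) volume b (b+1) := by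
    apply ContinuousOn.intervalIntegrable
    rw [Set.uIcc_of_le hlt]
    exact hth.mul hKrad_cont.continuousOn
  constructor
  · rw [hH r y]
    apply mul_nonneg (by positivity)
    apply intervalIntegral.integral_nonneg hlt
    intro t ht
    rw [key t]
    have ht0 : 0 < t := hb.trans_le ht.1
    exact mul_nonneg (mul_nonneg ht0.le (hhnonneg t ht)) (hKcos_nonneg t ht)
  · rw [hH r y, hHtil r y]
    apply mul_le_mul_of_nonneg_left ?_ (by positivity)
    have e1 : (∫ t in b..(b+1), ∫ θ in (0:ℝ)..(2*π), t * h t * Real.cos (N * θ) /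
        (r ^ 2 + t ^ 2 + y ^ 2 - 2 * r * t * Real.cos θ) ^ (1 + s))
        = ∫ t in b..(b+1), (t * h t) * Kcos t :=
      intervalIntegral.integral_congr (fun t _ => key t)
    have e2 : (∫ t in b..(b+1), ∫ θ in (0:ℝ)..(2*π), t * h t /
        (r ^ 2 + t ^ 2 + y ^ 2 - 2 * r * t * Real.cos θ) ^ (1 + s))
        = ∫ t in b..(b+1), (t * h t) * Krad t :=
      intervalIntegral.integral_congr (fun t _ => keyrad t)
    rw [e1, e2]
    apply intervalIntegral.integral_mono_on hlt hint1 hint2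
    intro t ht
    have ht0 : 0 < t := hb.trans_le ht.1
    exact mul_le_mul_of_nonneg_left (hKle t ht)
      (mul_nonneg ht0.le (hhnonneg t ht))
end

section
/- Let 0 < s < 1/2 and let N be a positive integer. Then there exists a constant C = C(s,N) > 0 such that for every b ≥ 1, every measurable h : [b,b+1] → [0,∞), and every r ∈ [b,b+1], c_{2,s} ∫_0^{2π} ∫_b^{b+1} h(t)·(1 − sin(Nθ))·t / (r² + t² − 2rt·cos(θ − π/(2N)))^{1+s} dt dθ ≤ C · b^{−1−2s} · ( 2π ∫_b^{b+1} h(t)² t dt )^{1/2}. -/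
set_option maxHeartbeats 1000000

open MeasureTheory Real
open scoped ENNReal

lemma lint_right {p : ℝ} (hp0 : 0 < p) (hp1 : p < 1) {L : ℝ} (hL : 0 < L) (x : ℝ) :
    ∫⁻ t in Set.Ioc x (x + L), ENNReal.ofReal ((t - x) ^ (-p)) ≤
      ENNReal.ofReal (L ^ (1 - p) / (1 - p)) := by
  have hInt : IntervalIntegrable (fun t : ℝ => (t - x) ^ (-p)) volume x (x + L) := by
    have := (intervalIntegral.intervalIntegrable_rpow' (a := 0) (b := L) (r := -p) (by linarith)).comp_sub_right x
    simpa [add_comm] using this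
  have hIoc : IntegrableOn (fun t : ℝ => (t - x) ^ (-p)) (Set.Ioc x (x + L)) := by
    have := hInt.1
    simpa using this
  have hnn : 0 ≤ᶠ[ae (volume.restrict (Set.Ioc x (x + L)))] fun t : ℝ => (t - x) ^ (-p) := by
    filter_upwards [ae_restrict_mem measurableSet_Ioc] with t ht
    exact Real.rpow_nonneg (by linarith [ht.1]) _
  rw [← MeasureTheory.ofReal_integral_eq_lintegral_ofReal hIoc hnn]
  apply ENNReal.ofReal_le_ofReal
  have hval : ∫ t in Set.Ioc x (x + L), (t - x) ^ (-p) = L ^ (1 - p) / (1 - p) := by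
    rw [← intervalIntegral.integral_of_le (by linarith)]
    rw [intervalIntegral.integral_comp_sub_right (fun u : ℝ => u ^ (-p)) x]
    simp only [sub_self, add_sub_cancel_left]
    rw [integral_rpow (Or.inl (by linarith))]
    rw [Real.zero_rpow (by linarith)]
    norm_num
    ring_nf
  rw [hval]

lemma lint_left {p : ℝ} (hp0 : 0 < p) (hp1 : p < 1) {L : ℝ} (hL : 0 < L) (x : ℝ) :
    ∫⁻ t in Set.Ioc (x - L) x, ENNReal.ofReal ((x - t) ^ (-p)) ≤
      ENNReal.ofReal (L ^ (1 - p) / (1 - p)) := by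
  have hInt : IntervalIntegrable (fun t : ℝ => (x - t) ^ (-p)) volume (x - L) x := by
    have := (intervalIntegral.intervalIntegrable_rpow' (a := 0) (b := L) (r := -p) (by linarith)).comp_sub_left x
    exact (by simpa using this : IntervalIntegrable _ volume x (x - L)).symm
  have hIoc : IntegrableOn (fun t : ℝ => (x - t) ^ (-p)) (Set.Ioc (x - L) x) := by
    have := hInt.1
    simpa [Set.uIoc_of_le (by linarith : x - L ≤ x)] using this
  have hnn : 0 ≤ᶠ[ae (volume.restrict (Set.Ioc (x - L) x))] fun t : ℝ => (x - t) ^ (-p) := by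
    filter_upwards [ae_restrict_mem measurableSet_Ioc] with t ht
    exact Real.rpow_nonneg (by linarith [ht.2]) _
  rw [← MeasureTheory.ofReal_integral_eq_lintegral_ofReal hIoc hnn]
  apply ENNReal.ofReal_le_ofReal
  have hval : ∫ t in Set.Ioc (x - L) x, (x - t) ^ (-p) = L ^ (1 - p) / (1 - p) := by
    rw [← intervalIntegral.integral_of_le (by linarith)]
    rw [intervalIntegral.integral_comp_sub_left (fun u : ℝ => u ^ (-p)) x]
    simp only [sub_self, sub_sub_cancel]
    rw [integral_rpow (Or.inl (by linarith))]
    rw [Real.zero_rpow (by linarith)]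
    norm_num
    ring_nf
  rw [hval]

lemma key_int {p : ℝ} (hp0 : 0 < p) (hp1 : p < 1) (x : ℝ) (S : Set ℝ)
    (hS : S ⊆ Set.Icc (x - 4 * π) (x + 4 * π)) :
    ∫⁻ t in S, ENNReal.ofReal (|x - t| ^ (-p)) ≤
      ENNReal.ofReal (2 * ((4 * π) ^ (1 - p) / (1 - p))) := by
  have hL : 0 < 4 * π := by positivity
  calc ∫⁻ t in S, ENNReal.ofReal (|x - t| ^ (-p))
      ≤ ∫⁻ t in Set.Icc (x - 4 * π) (x + 4 * π), ENNReal.ofReal (|x - t| ^ (-p)) :=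
        lintegral_mono_set hS
    _ = ∫⁻ t in Set.Icc (x - 4 * π) x ∪ Set.Ioc x (x + 4 * π),
          ENNReal.ofReal (|x - t| ^ (-p)) := by
        rw [Set.Icc_union_Ioc_eq_Icc (by linarith) (by linarith)]
    _ ≤ (∫⁻ t in Set.Icc (x - 4 * π) x, ENNReal.ofReal (|x - t| ^ (-p))) +
        ∫⁻ t in Set.Ioc x (x + 4 * π), ENNReal.ofReal (|x - t| ^ (-p)) :=
        lintegral_union_le _ _ _
    _ ≤ ENNReal.ofReal ((4 * π) ^ (1 - p) / (1 - p)) +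
        ENNReal.ofReal ((4 * π) ^ (1 - p) / (1 - p)) := by
        gcongr
        · calc ∫⁻ t in Set.Icc (x - 4 * π) x, ENNReal.ofReal (|x - t| ^ (-p))
              = ∫⁻ t in Set.Ioc (x - 4 * π) x, ENNReal.ofReal (|x - t| ^ (-p)) := by
                rw [Measure.restrict_congr_set MeasureTheory.Ioc_ae_eq_Icc]
            _ = ∫⁻ t in Set.Ioc (x - 4 * π) x, ENNReal.ofReal ((x - t) ^ (-p)) := by
                apply setLIntegral_congr_fun measurableSet_Ioc
                intro t ht
                beta_reduce
                rw [abs_of_nonneg (by linarith [ht.2])]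
            _ ≤ _ := lint_left hp0 hp1 hL x
        · calc ∫⁻ t in Set.Ioc x (x + 4 * π), ENNReal.ofReal (|x - t| ^ (-p))
              = ∫⁻ t in Set.Ioc x (x + 4 * π), ENNReal.ofReal ((t - x) ^ (-p)) := by
                apply setLIntegral_congr_fun measurableSet_Ioc
                intro t ht
                beta_reduce
                rw [abs_of_nonpos (by linarith [ht.1]), neg_sub]
            _ ≤ _ := lint_right hp0 hp1 hL x
    _ = ENNReal.ofReal (2 * ((4 * π) ^ (1 - p) / (1 - p))) := by
        rw [← ENNReal.ofReal_add (div_nonneg (Real.rpow_nonneg hL.le _) (by linarith)) (div_nonneg (Real.rpow_nonneg hL.le _) (by linarith))]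
        ring_nf

lemma kernel_bound (s : ℝ) (hs0 : 0 < s) (hs12 : s < 1 / 2) (N : ℕ) (hN : 0 < N)
    {b r t θ : ℝ} (hb : 1 ≤ b) (hr : r ∈ Set.Icc b (b + 1)) (ht : t ∈ Set.Icc b (b + 1))
    (hθ : θ ∈ Set.Ioc (0 : ℝ) (2 * π)) (hne : t ≠ r) (hθne : θ ≠ π / (2 * N)) :
    (1 - Real.sin (N * θ)) ^ 2 * t /
        (r ^ 2 + t ^ 2 - 2 * r * t * Real.cos (θ - π / (2 * N))) ^ (2 + 2 * s) ≤
      8 * (N : ℝ) ^ 4 * b ^ (-3 - 2 * s) *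
        (min |θ - π / (2 * N)| |θ - (π / (2 * N) + 2 * π)|) ^ (-(2 * s)) *
        |r - t| ^ (-(2 * s)) := by
  have hNR : (0 : ℝ) < N := by exact_mod_cast hN
  have hN1 : (1 : ℝ) ≤ N := by exact_mod_cast hN
  set θ₀ : ℝ := π / (2 * N) with hθ₀def
  have hθ₀pos : 0 < θ₀ := by positivity
  have hθ₀le : θ₀ ≤ π / 2 := by
    rw [hθ₀def, div_le_div_iff₀ (by positivity) (by norm_num)]
    nlinarith only [pi_pos, hN1]
  set φ : ℝ := θ - θ₀ with hφdef
  set u : ℝ := |θ - θ₀| with hudef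
  set v : ℝ := |θ - (θ₀ + 2 * π)| with hvdef
  have hφ2π : φ - 2 * π < 0 := by
    have := hθ.2
    simp only [hφdef]
    linarith
  have hv : v = 2 * π - φ := by
    rw [hvdef, abs_of_neg (by linarith : θ - (θ₀ + 2 * π) < 0)]
    ring
  have hu_pos : 0 < u := abs_pos.2 (sub_ne_zero.2 hθne)
  have hv_pos : 0 < v := by rw [hv]; linarith
  set ψ : ℝ := min u v with hψdef
  have hψpos : 0 < ψ := lt_min hu_pos hv_pos
  have hψπ : ψ ≤ π := by
    rcases le_total φ 0 with hφ0 | hφ0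
    · have hu : u ≤ π / 2 := by
        rw [hudef, abs_of_nonpos (by linarith : θ - θ₀ ≤ 0)]
        have := hθ.1
        simp only [hφdef] at hφ0
        linarith
      exact le_trans (min_le_left _ _) (by linarith [pi_pos])
    · have hu : u = φ := by rw [hudef, abs_of_nonneg (by linarith : (0:ℝ) ≤ θ - θ₀)]
      rcases le_total φ π with h | h
      · exact le_trans (min_le_left _ _) (by rw [hu]; exact h)
      · exact le_trans (min_le_right _ _) (by rw [hv]; linarith)
  -- cos φ = cos ψ
  have hcosu : Real.cos u = Real.cos φ := by rw [hudef, Real.cos_abs]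
  have hcosv : Real.cos v = Real.cos φ := by rw [hv, Real.cos_two_pi_sub]
  have hcosψ : Real.cos ψ = Real.cos φ := by
    rcases min_choice u v with h | h
    · rw [hψdef, h, hcosu]
    · rw [hψdef, h, hcosv]
  -- sin(Nθ) = cos(Nφ)
  have hsin : Real.sin (N * θ) = Real.cos (N * φ) := by
    have hNθ : (N : ℝ) * θ = N * φ + π / 2 := by
      simp only [hφdef, hθ₀def]
      field_simp
      ring
    rw [hNθ, Real.sin_add_pi_div_two]
  -- numerator bound
  have hcosle : Real.cos (N * φ) ≤ 1 := Real.cos_le_one _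
  have h_num : 1 - Real.cos (N * φ) ≤ (N : ℝ) ^ 2 / 2 * ψ ^ 2 := by
    have h1 : 1 - Real.cos (N * φ) ≤ (N : ℝ) ^ 2 / 2 * u ^ 2 := by
      have := Real.one_sub_sq_div_two_le_cos (x := N * φ)
      have : 1 - Real.cos (N * φ) ≤ ((N : ℝ) * φ) ^ 2 / 2 := by linarith
      calc 1 - Real.cos (N * φ) ≤ ((N : ℝ) * φ) ^ 2 / 2 := this
        _ = (N : ℝ) ^ 2 / 2 * φ ^ 2 := by ring
        _ = (N : ℝ) ^ 2 / 2 * u ^ 2 := by rw [hudef, sq_abs]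
    have h2 : 1 - Real.cos (N * φ) ≤ (N : ℝ) ^ 2 / 2 * v ^ 2 := by
      have hper : Real.cos ((N : ℝ) * φ - (N : ℤ) * (2 * π)) = Real.cos ((N : ℝ) * φ) :=
        Real.cos_sub_int_mul_two_pi _ _
      have := Real.one_sub_sq_div_two_le_cos (x := (N : ℝ) * φ - (N : ℤ) * (2 * π))
      rw [hper] at this
      have h3 : 1 - Real.cos ((N:ℝ) * φ) ≤ ((N : ℝ) * φ - (N : ℤ) * (2 * π)) ^ 2 / 2 := by
        linarith
      have h4 : ((N : ℝ) * φ - (N : ℤ) * (2 * π)) ^ 2 = (N : ℝ) ^ 2 * (φ - 2 * π) ^ 2 := by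
        push_cast
        ring
      have h5 : (φ - 2 * π) ^ 2 = v ^ 2 := by
        rw [hv]
        ring
      calc 1 - Real.cos ((N:ℝ) * φ) ≤ ((N : ℝ) * φ - (N : ℤ) * (2 * π)) ^ 2 / 2 := h3
        _ = (N : ℝ) ^ 2 / 2 * v ^ 2 := by rw [h4, h5]; ring
    rcases min_choice u v with h | h
    · rw [hψdef, h]; exact h1
    · rw [hψdef, h]; exact h2
  -- denominator lower bound
  set a : ℝ := |r - t| with hadef
  have ha_pos : 0 < a := abs_pos.2 (sub_ne_zero.2 (fun hh => hne hh.symm))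
  set X : ℝ := 4 / π ^ 2 * b ^ 2 * ψ ^ 2 with hXdef
  have hX_pos : 0 < X := by positivity
  have hb0 : (0 : ℝ) < b := by linarith
  have hcoslb : Real.cos φ ≤ 1 - 2 / π ^ 2 * ψ ^ 2 := by
    rw [← hcosψ]
    exact Real.cos_le_one_sub_mul_cos_sq (by rw [abs_of_nonneg hψpos.le]; exact hψπ)
  have h_D : a ^ 2 + X ≤ r ^ 2 + t ^ 2 - 2 * r * t * Real.cos φ := by
    have hD : r ^ 2 + t ^ 2 - 2 * r * t * Real.cos φ =
        (r - t) ^ 2 + 2 * r * t * (1 - Real.cos φ) := by ring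
    have ha2 : a ^ 2 = (r - t) ^ 2 := by rw [hadef, sq_abs]
    have hrt : b ^ 2 ≤ r * t := by nlinarith [hr.1, ht.1]
    have h1cos : 2 / π ^ 2 * ψ ^ 2 ≤ 1 - Real.cos φ := by linarith
    have hps : 0 < 2 / π ^ 2 * ψ ^ 2 := by positivity
    have key : 4 / π ^ 2 * b ^ 2 * ψ ^ 2 ≤ 2 * (r * t) * (1 - Real.cos φ) := by
      calc 4 / π ^ 2 * b ^ 2 * ψ ^ 2 = 2 * b ^ 2 * (2 / π ^ 2 * ψ ^ 2) := by ring
        _ ≤ 2 * (r * t) * (1 - Real.cos φ) :=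
            mul_le_mul (by linarith) h1cos hps.le (by nlinarith only [hrt, hb])
    rw [hD, ha2, hXdef]
    linarith [key]
  -- rpow estimates
  have hD2 : (0:ℝ) ≤ r ^ 2 + t ^ 2 - 2 * r * t * Real.cos φ := le_trans (by positivity) h_D
  have hP : (0:ℝ) < a ^ 2 + X := by positivity
  have step1 : (a ^ 2 + X) ^ (2 + 2 * s) ≤
      (r ^ 2 + t ^ 2 - 2 * r * t * Real.cos φ) ^ (2 + 2 * s) :=
    Real.rpow_le_rpow hP.le h_D (by linarith)
  have hsqrtX : Real.sqrt X ^ (2 * s) = X ^ s := by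
    rw [Real.sqrt_eq_rpow, ← Real.rpow_mul hX_pos.le]
    ring_nf
  have haX : a * Real.sqrt X ≤ a ^ 2 + X := by
    nlinarith only [sq_nonneg (a - Real.sqrt X), Real.sq_sqrt hX_pos.le, Real.sqrt_nonneg X,
      ha_pos.le, mul_nonneg ha_pos.le (Real.sqrt_nonneg X)]
  have step2 : a ^ (2 * s) * X ^ (2 + s) ≤ (a ^ 2 + X) ^ (2 + 2 * s) := by
    have e1 : (a ^ 2 + X) ^ (2 + 2 * s) = (a ^ 2 + X) ^ (2:ℝ) * (a ^ 2 + X) ^ (2 * s) :=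
      Real.rpow_add hP 2 (2 * s)
    have e2 : X ^ (2:ℝ) ≤ (a ^ 2 + X) ^ (2:ℝ) :=
      Real.rpow_le_rpow hX_pos.le (by nlinarith only [sq_nonneg a]) (by norm_num)
    have e3 : (a * Real.sqrt X) ^ (2 * s) ≤ (a ^ 2 + X) ^ (2 * s) :=
      Real.rpow_le_rpow (by positivity) haX (by linarith)
    have e4 : (a * Real.sqrt X) ^ (2 * s) = a ^ (2 * s) * X ^ s := by
      rw [Real.mul_rpow ha_pos.le (Real.sqrt_nonneg X), hsqrtX]
    have e5 : X ^ (2:ℝ) * X ^ s = X ^ (2 + s) := (Real.rpow_add hX_pos 2 s).symm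
    calc a ^ (2 * s) * X ^ (2 + s) = X ^ (2:ℝ) * (a ^ (2 * s) * X ^ s) := by rw [← e5]; ring
      _ = X ^ (2:ℝ) * (a * Real.sqrt X) ^ (2 * s) := by rw [e4]
      _ ≤ (a ^ 2 + X) ^ (2:ℝ) * (a ^ 2 + X) ^ (2 * s) :=
          mul_le_mul e2 e3 (by positivity) (by positivity)
      _ = (a ^ 2 + X) ^ (2 + 2 * s) := e1.symm
  have hDen : a ^ (2 * s) * X ^ (2 + s) ≤
      (r ^ 2 + t ^ 2 - 2 * r * t * Real.cos φ) ^ (2 + 2 * s) := le_trans step2 step1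
  have hDenpos : (0:ℝ) < a ^ (2 * s) * X ^ (2 + s) := by positivity
  have htpos : (0:ℝ) < t := by linarith [ht.1]
  have numbd : (1 - Real.cos (N * φ)) ^ 2 * t ≤ (N:ℝ) ^ 4 / 4 * ψ ^ 4 * (2 * b) := by
    have h0 : 0 ≤ 1 - Real.cos (N * φ) := by linarith [Real.cos_le_one ((N:ℝ) * φ)]
    have hsq : (1 - Real.cos (N * φ)) ^ 2 ≤ ((N:ℝ) ^ 2 / 2 * ψ ^ 2) ^ 2 :=
      pow_le_pow_left₀ h0 h_num 2
    have ht2 : t ≤ 2 * b := by linarith [ht.2]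
    calc (1 - Real.cos (N * φ)) ^ 2 * t ≤ ((N:ℝ) ^ 2 / 2 * ψ ^ 2) ^ 2 * (2 * b) :=
        mul_le_mul hsq ht2 htpos.le (by positivity)
      _ = (N:ℝ) ^ 4 / 4 * ψ ^ 4 * (2 * b) := by ring
  -- exponent bookkeeping
  have ea : a ^ (-(2 * s)) * a ^ (2 * s) = 1 := by
    rw [← Real.rpow_add ha_pos, neg_add_cancel, Real.rpow_zero]
  have eX : X ^ (2 + s) = (4 / π ^ 2) ^ (2 + s) * b ^ (2 * (2 + s)) * ψ ^ (2 * (2 + s)) := by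
    rw [hXdef, Real.mul_rpow (by positivity) (by positivity),
      Real.mul_rpow (by positivity) (by positivity),
      ← Real.rpow_natCast b 2, ← Real.rpow_natCast ψ 2,
      ← Real.rpow_mul hb0.le, ← Real.rpow_mul hψpos.le]
    norm_num
  have eb : b ^ (-3 - 2 * s) * b ^ (2 * (2 + s)) = b := by
    rw [← Real.rpow_add hb0, show (-3 - 2 * s) + 2 * (2 + s) = 1 by ring, Real.rpow_one]
  have eψ : ψ ^ (-(2 * s)) * ψ ^ (2 * (2 + s)) = ψ ^ 4 := by
    rw [← Real.rpow_add hψpos, show -(2 * s) + 2 * (2 + s) = ((4:ℕ):ℝ) by push_cast; ring,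
      Real.rpow_natCast]
  have hpow : (1:ℝ) / 16 ≤ (4 / π ^ 2) ^ (2 + s) := by
    have hbase : (0:ℝ) < 4 / π ^ 2 := by positivity
    have hb1 : 4 / π ^ 2 ≤ 1 := by
      rw [div_le_one (by positivity)]
      nlinarith only [pi_gt_three]
    have h3 : (4 / π ^ 2) ^ ((3:ℕ):ℝ) ≤ (4 / π ^ 2) ^ (2 + s) :=
      Real.rpow_le_rpow_of_exponent_ge hbase hb1 (by push_cast; linarith)
    have hcube : (1:ℝ) / 16 ≤ (4 / π ^ 2) ^ ((3:ℕ):ℝ) := by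
      rw [Real.rpow_natCast, div_pow]
      rw [div_le_div_iff₀ (by norm_num) (by positivity)]
      have hpi2 : π ^ 2 ≤ 10 := by nlinarith only [pi_lt_d2, pi_pos]
      have h6 : (π ^ 2) ^ 3 ≤ 10 ^ 3 := pow_le_pow_left₀ (sq_nonneg π) hpi2 3
      norm_num at h6 ⊢
      linarith
    linarith
  have eR : 8 * (N:ℝ) ^ 4 * b ^ (-3 - 2 * s) * ψ ^ (-(2 * s)) * a ^ (-(2 * s)) *
      (a ^ (2 * s) * X ^ (2 + s)) =
      8 * (N:ℝ) ^ 4 * (4 / π ^ 2) ^ (2 + s) * b * ψ ^ 4 := by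
    rw [eX, show 8 * (N:ℝ) ^ 4 * b ^ (-3 - 2 * s) * ψ ^ (-(2 * s)) * a ^ (-(2 * s)) *
        (a ^ (2 * s) * ((4 / π ^ 2) ^ (2 + s) * b ^ (2 * (2 + s)) * ψ ^ (2 * (2 + s)))) =
        8 * (N:ℝ) ^ 4 * (4 / π ^ 2) ^ (2 + s) * (b ^ (-3 - 2 * s) * b ^ (2 * (2 + s))) *
        ((ψ ^ (-(2 * s)) * ψ ^ (2 * (2 + s))) * (a ^ (-(2 * s)) * a ^ (2 * s))) from by ring,
      eb, eψ, ea]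
    ring
  -- conclude
  rw [hsin]
  calc (1 - Real.cos (N * φ)) ^ 2 * t /
        (r ^ 2 + t ^ 2 - 2 * r * t * Real.cos φ) ^ (2 + 2 * s)
      ≤ (1 - Real.cos (N * φ)) ^ 2 * t / (a ^ (2 * s) * X ^ (2 + s)) := by
        gcongr
    _ ≤ ((N:ℝ) ^ 4 / 4 * ψ ^ 4 * (2 * b)) / (a ^ (2 * s) * X ^ (2 + s)) := by
        gcongr
    _ ≤ 8 * (N:ℝ) ^ 4 * b ^ (-3 - 2 * s) * ψ ^ (-(2 * s)) * a ^ (-(2 * s)) := by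
        rw [div_le_iff₀ hDenpos, eR]
        have hfac : (0:ℝ) ≤ (N:ℝ) ^ 4 * ψ ^ 4 * b := by positivity
        nlinarith only [mul_le_mul_of_nonneg_right hpow hfac]

lemma inner_estimate (s : ℝ) (hs0 : 0 < s) (hs12 : s < 1 / 2) (N : ℕ) (hN : 0 < N)
    {b : ℝ} (hb : 1 ≤ b) (h : ℝ → ℝ) (hmeas : Measurable h)
    (hpos : ∀ t ∈ Set.Icc b (b + 1), 0 ≤ h t)
    {r : ℝ} (hr : r ∈ Set.Icc b (b + 1)) {θ : ℝ} (hθ : θ ∈ Set.Ioc (0 : ℝ) (2 * π))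
    (hθne : θ ≠ π / (2 * N)) :
    ∫⁻ t in Set.Icc b (b + 1), ENNReal.ofReal (h t * (1 - Real.sin (N * θ)) * t /
        (r ^ 2 + t ^ 2 - 2 * r * t * Real.cos (θ - π / (2 * N))) ^ (1 + s)) ≤
      ENNReal.ofReal ((8 * (N : ℝ) ^ 4 * (2 * ((4 * π) ^ (1 - 2 * s) / (1 - 2 * s)))) ^ ((1:ℝ)/2)
          * b ^ ((-3 - 2 * s) * ((1:ℝ)/2))
          * (min |θ - π / (2 * N)| |θ - (π / (2 * N) + 2 * π)|) ^ (-s)) *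
        (∫⁻ t in Set.Icc b (b + 1), ENNReal.ofReal ((h t) ^ 2 * t)) ^ ((1:ℝ)/2) := by
  have hb0 : (0 : ℝ) < b := by linarith
  set d : ℝ → ℝ := fun t => r ^ 2 + t ^ 2 - 2 * r * t * Real.cos (θ - π / (2 * N)) with hd
  have hd0 : ∀ t ∈ Set.Icc b (b + 1), 0 ≤ d t := by
    intro t ht
    have h1 : Real.cos (θ - π / (2 * N)) ≤ 1 := Real.cos_le_one _
    have hrt : 0 ≤ r * t := mul_nonneg (by linarith [hr.1]) (by linarith [ht.1])
    show (0:ℝ) ≤ r ^ 2 + t ^ 2 - 2 * r * t * Real.cos (θ - π / (2 * N))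
    nlinarith only [sq_nonneg (r - t), h1, hrt]
  have hsin1 : Real.sin ((N : ℝ) * θ) ≤ 1 := Real.sin_le_one _
  set F : ℝ → ℝ≥0∞ := fun t => ENNReal.ofReal (h t * Real.sqrt t) with hF
  set G : ℝ → ℝ≥0∞ := fun t =>
    ENNReal.ofReal ((1 - Real.sin (N * θ)) * Real.sqrt t / d t ^ (1 + s)) with hG
  have hFmeas : Measurable F := (hmeas.mul Real.continuous_sqrt.measurable).ennreal_ofReal
  have hdmeas : Measurable d := by
    apply Measurable.sub
    · exact (measurable_const.add (measurable_id.pow_const 2))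
    · exact (measurable_const.mul measurable_id).mul measurable_const
  have hGmeas : Measurable G := by
    apply Measurable.ennreal_ofReal
    exact (measurable_const.mul Real.continuous_sqrt.measurable).div (by fun_prop)
  -- Step A: rewrite integrand as F * G
  have stepA : ∫⁻ t in Set.Icc b (b + 1), ENNReal.ofReal (h t * (1 - Real.sin (N * θ)) * t /
      d t ^ (1 + s)) = ∫⁻ t in Set.Icc b (b + 1), F t * G t := by
    apply setLIntegral_congr_fun measurableSet_Icc
    intro t ht
    beta_reduce
    have ht0 : (0 : ℝ) < t := by linarith [ht.1]
    have hsq : Real.sqrt t * Real.sqrt t = t := Real.mul_self_sqrt ht0.le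
    rw [hF, hG]
    rw [← ENNReal.ofReal_mul (mul_nonneg (hpos t ht) (Real.sqrt_nonneg t))]
    congr 1
    have e : (h t * Real.sqrt t) * ((1 - Real.sin (N * θ)) * Real.sqrt t / d t ^ (1 + s))
        = h t * (1 - Real.sin (N * θ)) * (Real.sqrt t * Real.sqrt t) / d t ^ (1 + s) := by
      ring
    rw [e, hsq]
  -- Cauchy-Schwarz
  have h22 : Real.HolderConjugate 2 2 := Real.HolderConjugate.two_two
  have stepCS := ENNReal.lintegral_mul_le_Lp_mul_Lq (volume.restrict (Set.Icc b (b + 1))) h22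
    hFmeas.aemeasurable hGmeas.aemeasurable
  -- F part
  have hFsq : ∫⁻ t in Set.Icc b (b + 1), F t ^ (2:ℝ) =
      ∫⁻ t in Set.Icc b (b + 1), ENNReal.ofReal ((h t) ^ 2 * t) := by
    apply setLIntegral_congr_fun measurableSet_Icc
    intro t ht
    beta_reduce
    have ht0 : (0 : ℝ) ≤ t := by linarith [ht.1]
    have hx : (0:ℝ) ≤ h t * Real.sqrt t := mul_nonneg (hpos t ht) (Real.sqrt_nonneg t)
    rw [hF, ENNReal.ofReal_rpow_of_nonneg hx (by norm_num)]
    congr 1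
    rw [Real.rpow_two]
    rw [mul_pow, Real.sq_sqrt ht0]
  -- G part
  have hGsq : ∫⁻ t in Set.Icc b (b + 1), G t ^ (2:ℝ) ≤
      ENNReal.ofReal ((8 * (N : ℝ) ^ 4 * (2 * ((4 * π) ^ (1 - 2 * s) / (1 - 2 * s))))
        * b ^ (-3 - 2 * s)
        * (min |θ - π / (2 * N)| |θ - (π / (2 * N) + 2 * π)|) ^ (-(2 * s))) := by
    have e1 : ∫⁻ t in Set.Icc b (b + 1), G t ^ (2:ℝ) =
        ∫⁻ t in Set.Icc b (b + 1), ENNReal.ofReal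
          ((1 - Real.sin (N * θ)) ^ 2 * t / d t ^ (2 + 2 * s)) := by
      apply setLIntegral_congr_fun measurableSet_Icc
      intro t ht
      beta_reduce
      have ht0 : (0 : ℝ) ≤ t := by linarith [ht.1]
      have hx : (0:ℝ) ≤ (1 - Real.sin (N * θ)) * Real.sqrt t / d t ^ (1 + s) := by
        apply div_nonneg (mul_nonneg (by linarith) (Real.sqrt_nonneg t))
        exact Real.rpow_nonneg (hd0 t ht) _
      rw [hG, ENNReal.ofReal_rpow_of_nonneg hx (by norm_num)]
      congr 1
      rw [Real.rpow_two, div_pow, mul_pow, Real.sq_sqrt ht0]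
      congr 1
      rw [← Real.rpow_natCast (d t ^ (1 + s)) 2, ← Real.rpow_mul (hd0 t ht)]
      norm_num
      ring_nf
    rw [e1]
    have hae : ∀ᵐ (t : ℝ) ∂(volume.restrict (Set.Icc b (b + 1))), t ≠ r := by
      rw [MeasureTheory.ae_iff]
      have he : {t : ℝ | ¬ t ≠ r} = {r} := by ext x; simp
      rw [he]
      refine le_antisymm ?_ zero_le
      calc (volume.restrict (Set.Icc b (b + 1))) {r} ≤ volume {r} :=
            Measure.restrict_le_self _
        _ = 0 := by simp
    set ψ : ℝ := min |θ - π / (2 * N)| |θ - (π / (2 * N) + 2 * π)| with hψ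
    have hmono : ∫⁻ t in Set.Icc b (b + 1), ENNReal.ofReal
        ((1 - Real.sin (N * θ)) ^ 2 * t / d t ^ (2 + 2 * s)) ≤
        ∫⁻ t in Set.Icc b (b + 1), ENNReal.ofReal (8 * (N : ℝ) ^ 4 * b ^ (-3 - 2 * s) *
          ψ ^ (-(2 * s))) * ENNReal.ofReal (|r - t| ^ (-(2 * s))) := by
      apply lintegral_mono_ae
      filter_upwards [ae_restrict_mem measurableSet_Icc, hae] with t ht htr
      rw [← ENNReal.ofReal_mul (by positivity)]
      apply ENNReal.ofReal_le_ofReal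
      exact kernel_bound s hs0 hs12 N hN hb hr ht hθ htr hθne
    have hconst : ∫⁻ t in Set.Icc b (b + 1), ENNReal.ofReal (8 * (N : ℝ) ^ 4 *
        b ^ (-3 - 2 * s) * ψ ^ (-(2 * s))) * ENNReal.ofReal (|r - t| ^ (-(2 * s))) =
        ENNReal.ofReal (8 * (N : ℝ) ^ 4 * b ^ (-3 - 2 * s) * ψ ^ (-(2 * s))) *
        ∫⁻ t in Set.Icc b (b + 1), ENNReal.ofReal (|r - t| ^ (-(2 * s))) :=
      lintegral_const_mul' _ _ ENNReal.ofReal_ne_top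
    have hsub : Set.Icc b (b + 1) ⊆ Set.Icc (r - 4 * π) (r + 4 * π) := by
      intro x hx
      have := hr.1; have := hr.2
      constructor
      · nlinarith only [hx.1, hr.2, pi_gt_three]
      · nlinarith only [hx.2, hr.1, pi_gt_three]
    have hki := key_int (p := 2 * s) (by linarith) (by linarith) r _ hsub
    calc ∫⁻ t in Set.Icc b (b + 1), ENNReal.ofReal
          ((1 - Real.sin (N * θ)) ^ 2 * t / d t ^ (2 + 2 * s))
        ≤ _ := hmono
      _ = _ := hconst
      _ ≤ ENNReal.ofReal (8 * (N : ℝ) ^ 4 * b ^ (-3 - 2 * s) * ψ ^ (-(2 * s))) *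
          ENNReal.ofReal (2 * ((4 * π) ^ (1 - 2 * s) / (1 - 2 * s))) := by
          exact mul_le_mul_right hki _
      _ ≤ ENNReal.ofReal ((8 * (N : ℝ) ^ 4 * (2 * ((4 * π) ^ (1 - 2 * s) / (1 - 2 * s))))
            * b ^ (-3 - 2 * s) * ψ ^ (-(2 * s))) := by
          rw [← ENNReal.ofReal_mul (by positivity)]
          apply ENNReal.ofReal_le_ofReal
          apply le_of_eq
          ring
  -- combine
  rw [stepA]
  have hM0 : (0:ℝ) ≤ 8 * (N : ℝ) ^ 4 * (2 * ((4 * π) ^ (1 - 2 * s) / (1 - 2 * s))) := by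
    have : (0:ℝ) ≤ (4 * π) ^ (1 - 2 * s) / (1 - 2 * s) :=
      div_nonneg (Real.rpow_nonneg (by positivity) _) (by linarith)
    positivity
  have hψ0 : (0:ℝ) ≤ min |θ - π / (2 * N)| |θ - (π / (2 * N) + 2 * π)| :=
    le_min (abs_nonneg _) (abs_nonneg _)
  set ψ : ℝ := min |θ - π / (2 * N)| |θ - (π / (2 * N) + 2 * π)| with hψ
  set T : ℝ≥0∞ := ∫⁻ t in Set.Icc b (b + 1), ENNReal.ofReal ((h t) ^ 2 * t) with hT
  calc ∫⁻ t in Set.Icc b (b + 1), F t * G t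
      ≤ (∫⁻ t in Set.Icc b (b + 1), F t ^ (2:ℝ)) ^ ((1:ℝ)/2) *
        (∫⁻ t in Set.Icc b (b + 1), G t ^ (2:ℝ)) ^ ((1:ℝ)/2) := by
        simpa using stepCS
    _ = T ^ ((1:ℝ)/2) * (∫⁻ t in Set.Icc b (b + 1), G t ^ (2:ℝ)) ^ ((1:ℝ)/2) := by
        rw [hFsq]
    _ ≤ T ^ ((1:ℝ)/2) * (ENNReal.ofReal ((8 * (N : ℝ) ^ 4 *
          (2 * ((4 * π) ^ (1 - 2 * s) / (1 - 2 * s)))) * b ^ (-3 - 2 * s) *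
          ψ ^ (-(2 * s)))) ^ ((1:ℝ)/2) :=
        mul_le_mul_right (ENNReal.rpow_le_rpow hGsq (by norm_num)) _
    _ = ENNReal.ofReal (((8 * (N : ℝ) ^ 4 * (2 * ((4 * π) ^ (1 - 2 * s) / (1 - 2 * s)))) *
          b ^ (-3 - 2 * s) * ψ ^ (-(2 * s))) ^ ((1:ℝ)/2)) * T ^ ((1:ℝ)/2) := by
        rw [ENNReal.ofReal_rpow_of_nonneg (by positivity) (by norm_num)]
        ring
    _ = ENNReal.ofReal ((8 * (N : ℝ) ^ 4 * (2 * ((4 * π) ^ (1 - 2 * s) / (1 - 2 * s)))) ^ ((1:ℝ)/2)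
          * b ^ ((-3 - 2 * s) * ((1:ℝ)/2)) * ψ ^ (-s)) * T ^ ((1:ℝ)/2) := by
        congr 2
        rw [Real.mul_rpow (mul_nonneg hM0 (Real.rpow_nonneg hb0.le _)) (Real.rpow_nonneg hψ0 _),
          Real.mul_rpow hM0 (Real.rpow_nonneg hb0.le _),
          ← Real.rpow_mul hb0.le, ← Real.rpow_mul hψ0,
          show (-(2 * s)) * ((1:ℝ)/2) = -s by ring]

/-- estimate for the angular error term `B[h]`: for `0 < s < 1/2` there is
`C = C(s,N) > 0` so that for all `b ≥ 1`, all nonnegative measurable profiles `h` on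
`[b, b+1]`, and all `r ∈ [b, b+1]`,
`c_{2,s} ∫₀^{2π} ∫_b^{b+1} h(t)(1 − sin Nθ) t/(r²+t²−2rt cos(θ−π/2N))^{1+s} dt dθ
  ≤ C b^{−1−2s} ‖h‖_{L²(Ω_b)}`. -/
theorem angular_term_estimate (s : ℝ) (hs0 : 0 < s) (hs12 : s < 1 / 2)
    (N : ℕ) (hN : 0 < N) (c : ℝ) (hc : 0 < c) :
    ∃ C : ℝ, 0 < C ∧ ∀ b : ℝ, 1 ≤ b → ∀ h : ℝ → ℝ, Measurable h →
      (∀ t ∈ Set.Icc b (b + 1), 0 ≤ h t) → ∀ r ∈ Set.Icc b (b + 1),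
      ENNReal.ofReal c *
          ∫⁻ θ in Set.Ioc (0 : ℝ) (2 * π), ∫⁻ t in Set.Icc b (b + 1),
            ENNReal.ofReal (h t * (1 - Real.sin (N * θ)) * t /
              (r ^ 2 + t ^ 2 - 2 * r * t * Real.cos (θ - π / (2 * N))) ^ (1 + s))
        ≤ ENNReal.ofReal (C * b ^ (-1 - 2 * s)) *
          (ENNReal.ofReal (2 * π) *
            ∫⁻ t in Set.Icc b (b + 1), ENNReal.ofReal ((h t) ^ 2 * t)) ^ ((1 : ℝ) / 2) := by
  have hNR : (0 : ℝ) < N := by exact_mod_cast hN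
  have hπ : (0:ℝ) < π := pi_pos
  have h2s : 0 < 1 - 2 * s := by linarith
  have h1s : 0 < 1 - s := by linarith
  set M : ℝ := 8 * (N:ℝ) ^ 4 * (2 * ((4 * π) ^ (1 - 2 * s) / (1 - 2 * s))) with hM
  have hM0 : 0 < M := by
    have h1 : (0:ℝ) < (4 * π) ^ (1 - 2 * s) := Real.rpow_pos_of_pos (by positivity) _
    rw [hM]; positivity
  set Q : ℝ := 2 * (2 * ((4 * π) ^ (1 - s) / (1 - s))) with hQ
  have hQ0 : 0 < Q := by
    have h1 : (0:ℝ) < (4 * π) ^ (1 - s) := Real.rpow_pos_of_pos (by positivity) _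
    rw [hQ]; positivity
  have hMr0 : 0 < M ^ ((1:ℝ)/2) := Real.rpow_pos_of_pos hM0 _
  refine ⟨c * M ^ ((1:ℝ)/2) * Q, by positivity, ?_⟩
  intro b hb h hmeas hpos r hr
  have hb0 : (0:ℝ) < b := by linarith
  set T : ℝ≥0∞ := ∫⁻ t in Set.Icc b (b + 1), ENNReal.ofReal ((h t) ^ 2 * t) with hT
  have hCb0 : (0:ℝ) < c * M ^ ((1:ℝ)/2) * Q * b ^ (-1 - 2 * s) := by
    have := Real.rpow_pos_of_pos hb0 (-1 - 2 * s)
    positivity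
  by_cases hTtop : T = ⊤
  · have hrhs : ENNReal.ofReal (c * M ^ ((1:ℝ)/2) * Q * b ^ (-1 - 2 * s)) *
        (ENNReal.ofReal (2 * π) * T) ^ ((1:ℝ)/2) = ⊤ := by
      rw [hTtop, ENNReal.mul_top (ne_of_gt (ENNReal.ofReal_pos.2 (by positivity))),
        ENNReal.top_rpow_of_pos (by norm_num),
        ENNReal.mul_top (ne_of_gt (ENNReal.ofReal_pos.2 hCb0))]
    rw [hrhs]
    exact le_top
  · have hT12 : T ^ ((1:ℝ)/2) ≠ ⊤ := by
      exact ENNReal.rpow_ne_top_of_nonneg (by norm_num) hTtop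
    set θ₀ : ℝ := π / (2 * N) with hθ₀
    have hθ₀pos : 0 < θ₀ := by rw [hθ₀]; positivity
    have hθ₀le : θ₀ ≤ π / 2 := by
      rw [hθ₀, div_le_div_iff₀ (by positivity) (by norm_num)]
      nlinarith only [hπ, hNR, show (1:ℝ) ≤ N from by exact_mod_cast hN]
    have hae : ∀ᵐ (θ : ℝ) ∂(volume.restrict (Set.Ioc (0:ℝ) (2 * π))), θ ≠ θ₀ := by
      rw [MeasureTheory.ae_iff]
      have he : {θ : ℝ | ¬ θ ≠ θ₀} = {θ₀} := by ext x; simp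
      rw [he]
      refine le_antisymm ?_ zero_le
      calc (volume.restrict (Set.Ioc (0:ℝ) (2*π))) {θ₀} ≤ volume {θ₀} :=
          Measure.restrict_le_self _
        _ = 0 := by simp
    have key : ∫⁻ θ in Set.Ioc (0:ℝ) (2 * π), ∫⁻ t in Set.Icc b (b + 1),
        ENNReal.ofReal (h t * (1 - Real.sin (N * θ)) * t /
          (r ^ 2 + t ^ 2 - 2 * r * t * Real.cos (θ - π / (2 * N))) ^ (1 + s)) ≤
        ∫⁻ θ in Set.Ioc (0:ℝ) (2 * π),
          ENNReal.ofReal (M ^ ((1:ℝ)/2) * b ^ ((-3 - 2 * s) * ((1:ℝ)/2)) *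
            (min |θ - π / (2 * N)| |θ - (π / (2 * N) + 2 * π)|) ^ (-s)) * T ^ ((1:ℝ)/2) := by
      apply lintegral_mono_ae
      filter_upwards [ae_restrict_mem measurableSet_Ioc, hae] with θ hθJ hθne
      exact inner_estimate s hs0 hs12 N hN hb h hmeas hpos hr hθJ hθne
    have hWnn : (0:ℝ) ≤ M ^ ((1:ℝ)/2) * b ^ ((-3 - 2 * s) * ((1:ℝ)/2)) := by
      have := Real.rpow_pos_of_pos hb0 ((-3 - 2 * s) * ((1:ℝ)/2))
      positivity
    have hψle : ∀ θ : ℝ, ENNReal.ofReal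
        ((min |θ - π / (2 * N)| |θ - (π / (2 * N) + 2 * π)|) ^ (-s)) ≤
        ENNReal.ofReal (|θ₀ - θ| ^ (-s)) + ENNReal.ofReal (|θ₀ + 2 * π - θ| ^ (-s)) := by
      intro θ
      have e1 : |θ - π / (2 * N)| = |θ₀ - θ| := by rw [hθ₀, abs_sub_comm]
      have e2 : |θ - (π / (2 * N) + 2 * π)| = |θ₀ + 2 * π - θ| := by rw [hθ₀, abs_sub_comm]
      rcases min_choice |θ - π / (2 * N)| |θ - (π / (2 * N) + 2 * π)| with hm | hm
      · rw [hm, e1]; exact le_self_add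
      · rw [hm, e2]; exact le_add_self
    have hmeas1 : Measurable fun θ : ℝ => ENNReal.ofReal (|θ₀ - θ| ^ (-s)) := by fun_prop
    have hψint : ∫⁻ θ in Set.Ioc (0:ℝ) (2 * π), ENNReal.ofReal
        ((min |θ - π / (2 * N)| |θ - (π / (2 * N) + 2 * π)|) ^ (-s)) ≤
        ENNReal.ofReal Q := by
      calc ∫⁻ θ in Set.Ioc (0:ℝ) (2 * π), ENNReal.ofReal
            ((min |θ - π / (2 * N)| |θ - (π / (2 * N) + 2 * π)|) ^ (-s))
          ≤ ∫⁻ θ in Set.Ioc (0:ℝ) (2 * π),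
            (ENNReal.ofReal (|θ₀ - θ| ^ (-s)) + ENNReal.ofReal (|θ₀ + 2 * π - θ| ^ (-s))) :=
          lintegral_mono fun θ => hψle θ
        _ = (∫⁻ θ in Set.Ioc (0:ℝ) (2 * π), ENNReal.ofReal (|θ₀ - θ| ^ (-s))) +
            ∫⁻ θ in Set.Ioc (0:ℝ) (2 * π), ENNReal.ofReal (|θ₀ + 2 * π - θ| ^ (-s)) :=
          lintegral_add_left hmeas1 _
        _ ≤ ENNReal.ofReal (2 * ((4 * π) ^ (1 - s) / (1 - s))) +
            ENNReal.ofReal (2 * ((4 * π) ^ (1 - s) / (1 - s))) := by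
          gcongr
          · apply key_int hs0 (by linarith) θ₀
            intro θ hθJ
            exact ⟨by linarith [hθJ.1], by linarith [hθJ.2]⟩
          · apply key_int hs0 (by linarith) (θ₀ + 2 * π)
            intro θ hθJ
            exact ⟨by linarith [hθJ.1], by linarith [hθJ.2]⟩
        _ = ENNReal.ofReal Q := by
          rw [← ENNReal.ofReal_add (by positivity) (by positivity), hQ]
          ring_nf
    calc ENNReal.ofReal c * ∫⁻ θ in Set.Ioc (0:ℝ) (2 * π), ∫⁻ t in Set.Icc b (b + 1),
          ENNReal.ofReal (h t * (1 - Real.sin (N * θ)) * t /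
            (r ^ 2 + t ^ 2 - 2 * r * t * Real.cos (θ - π / (2 * N))) ^ (1 + s))
        ≤ ENNReal.ofReal c * ∫⁻ θ in Set.Ioc (0:ℝ) (2 * π),
            ENNReal.ofReal (M ^ ((1:ℝ)/2) * b ^ ((-3 - 2 * s) * ((1:ℝ)/2)) *
              (min |θ - π / (2 * N)| |θ - (π / (2 * N) + 2 * π)|) ^ (-s)) * T ^ ((1:ℝ)/2) :=
          mul_le_mul_right key _
      _ = ENNReal.ofReal c * ((∫⁻ θ in Set.Ioc (0:ℝ) (2 * π),
            ENNReal.ofReal (M ^ ((1:ℝ)/2) * b ^ ((-3 - 2 * s) * ((1:ℝ)/2)) *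
              (min |θ - π / (2 * N)| |θ - (π / (2 * N) + 2 * π)|) ^ (-s))) * T ^ ((1:ℝ)/2)) := by
          rw [lintegral_mul_const' _ _ hT12]
      _ = ENNReal.ofReal c * ((ENNReal.ofReal (M ^ ((1:ℝ)/2) * b ^ ((-3 - 2 * s) * ((1:ℝ)/2))) *
            ∫⁻ θ in Set.Ioc (0:ℝ) (2 * π), ENNReal.ofReal
              ((min |θ - π / (2 * N)| |θ - (π / (2 * N) + 2 * π)|) ^ (-s))) * T ^ ((1:ℝ)/2)) := by
          congr 2
          rw [← lintegral_const_mul' _ _ ENNReal.ofReal_ne_top]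
          apply lintegral_congr
          intro θ
          rw [← ENNReal.ofReal_mul hWnn]
      _ ≤ ENNReal.ofReal c * ((ENNReal.ofReal (M ^ ((1:ℝ)/2) * b ^ ((-3 - 2 * s) * ((1:ℝ)/2))) *
            ENNReal.ofReal Q) * T ^ ((1:ℝ)/2)) := by
          gcongr
      _ = ENNReal.ofReal (c * M ^ ((1:ℝ)/2) * Q * b ^ ((-3 - 2 * s) * ((1:ℝ)/2))) *
            T ^ ((1:ℝ)/2) := by
          rw [← ENNReal.ofReal_mul hWnn, ← mul_assoc, ← ENNReal.ofReal_mul hc.le,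
            show c * (M ^ ((1:ℝ)/2) * b ^ ((-3 - 2 * s) * ((1:ℝ)/2)) * Q)
              = c * M ^ ((1:ℝ)/2) * Q * b ^ ((-3 - 2 * s) * ((1:ℝ)/2)) from by ring]
      _ ≤ ENNReal.ofReal (c * M ^ ((1:ℝ)/2) * Q * b ^ (-1 - 2 * s)) *
            (ENNReal.ofReal (2 * π) * T) ^ ((1:ℝ)/2) := by
          apply mul_le_mul'
          · apply ENNReal.ofReal_le_ofReal
            apply mul_le_mul_of_nonneg_left _ (by positivity)
            apply Real.rpow_le_rpow_of_exponent_le hb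
            linarith
          · apply ENNReal.rpow_le_rpow _ (by norm_num)
            apply le_mul_of_one_le_left zero_le
            exact ENNReal.one_le_ofReal.2 (by nlinarith only [pi_gt_three])
end
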